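/- arXiv:0707.4124 — 4 statements merged into one kernel-verified Lean document; each statement's English description precedes it below -/
import Mathlib

section
/- Let α, β > 0 and let X and Y be independent random variables with X distributed as Exp(α) and Y distributed as Exp(β). Then the conditional law of X given the event {X ≥ Y} equals Exp(α+β) ⋆ Exp(α), the convolution of an exponential distribution of parameter α+β with an exponential distribution of parameter α. -/
open MeasureTheory Real Set ProbabilityTheory
open scoped ENNReal

noncomputable def cdfE (r x : ℝ) : ℝ≥0∞ :=
  ENNReal.ofReal (if 0 ≤ x then 1 - rexp (-(r * x)) else 0)

lemma one_sub_exp_nonneg {r x : ℝ} (hr : 0 ≤ r) (hx : 0 ≤ x) : 0 ≤ 1 - rexp (-(r * x)) := by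
  have : rexp (-(r * x)) ≤ 1 := exp_le_one_iff.mpr (by nlinarith)
  linarith

lemma measurable_exponentialPDF (r : ℝ) : Measurable (exponentialPDF r) :=
  (measurable_exponentialPDFReal r).ennreal_ofReal

lemma measurable_cdfE (r : ℝ) : Measurable (cdfE r) := by
  unfold cdfE
  apply Measurable.ennreal_ofReal
  exact Measurable.ite measurableSet_Ici
    (measurable_const.sub ((measurable_id.const_mul r).neg.exp)) measurable_const

lemma expMeasure_eq_withDensity (r : ℝ) :
    expMeasure r = volume.withDensity (exponentialPDF r) := rfl

lemma expMeasure_Iic {r : ℝ} (hr : 0 < r) (x : ℝ) :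
    expMeasure r (Iic x) = cdfE r x := by
  rw [expMeasure_eq_withDensity, withDensity_apply _ measurableSet_Iic,
    lintegral_exponentialPDF_eq_antiDeriv hr x, cdfE]

lemma enn_cancel {x y b c : ℝ≥0∞} (hb : b ≠ ⊤) (h1 : x + b = c) (h2 : y + b = c) : x = y :=
  WithTop.add_right_cancel hb (h1.trans h2.symm)

lemma pt1 {α β : ℝ} (hα : 0 < α) (hβ : 0 < β) (x : ℝ) :
    exponentialPDF α x * cdfE β x
      + ENNReal.ofReal (α / (α + β)) * exponentialPDF (α + β) x = exponentialPDF α x := by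
  rw [exponentialPDF_eq, exponentialPDF_eq, cdfE]
  split_ifs with h
  · rw [← ENNReal.ofReal_mul (by positivity), ← ENNReal.ofReal_mul (by positivity),
      ← ENNReal.ofReal_add
        (mul_nonneg (by positivity) (one_sub_exp_nonneg hβ.le h)) (by positivity)]
    congr 1
    have hE : rexp (-((α + β) * x)) = rexp (-(α * x)) * rexp (-(β * x)) := by
      rw [← exp_add]; ring_nf
    field_simp
    rw [mul_comm x β, mul_comm x (α + β)]
    linear_combination hE
  · simp

lemma pt2 {α β a : ℝ} (hα : 0 < α) (hβ : 0 < β) (ha : 0 ≤ a) (t : ℝ) :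
    exponentialPDF (α + β) t * cdfE α (a - t)
      + ENNReal.ofReal ((α + β) / β * rexp (-(α * a))) * (Iic a).indicator (exponentialPDF β) t
      = (Iic a).indicator (exponentialPDF (α + β)) t := by
  by_cases hta : t ≤ a
  · rw [Set.indicator_of_mem (show t ∈ Iic a from hta),
      Set.indicator_of_mem (show t ∈ Iic a from hta)]
    by_cases ht : 0 ≤ t
    · rw [exponentialPDF_of_nonneg ht, exponentialPDF_of_nonneg ht, cdfE,
        if_pos (by linarith : (0:ℝ) ≤ a - t)]
      rw [← ENNReal.ofReal_mul (by positivity), ← ENNReal.ofReal_mul (by positivity),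
        ← ENNReal.ofReal_add
          (mul_nonneg (by positivity) (one_sub_exp_nonneg hα.le (by linarith : (0:ℝ) ≤ a - t)))
          (by positivity)]
      congr 1
      have hE : rexp (-((α + β) * t)) * rexp (-(α * (a - t)))
          = rexp (-(α * a)) * rexp (-(β * t)) := by
        rw [← exp_add, ← exp_add]; ring_nf
      field_simp
      linear_combination (-1 : ℝ) * hE
    · rw [exponentialPDF_of_neg (by linarith), exponentialPDF_of_neg (by linarith)]
      simp
  · rw [Set.indicator_of_notMem (show t ∉ Iic a by simpa using hta),
      Set.indicator_of_notMem (show t ∉ Iic a by simpa using hta),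
      cdfE, if_neg (by push_neg at hta ⊢; linarith)]
    simp

lemma lintegral_expMeasure {r : ℝ} {g : ℝ → ℝ≥0∞} (hg : Measurable g) :
    ∫⁻ x, g x ∂(expMeasure r) = ∫⁻ x, exponentialPDF r x * g x := by
  rw [expMeasure_eq_withDensity,
    lintegral_withDensity_eq_lintegral_mul _ (measurable_exponentialPDF r) hg]
  rfl

lemma setLIntegral_expMeasure {r : ℝ} {g : ℝ → ℝ≥0∞} (hg : Measurable g)
    {s : Set ℝ} (hs : MeasurableSet s) :
    ∫⁻ x in s, g x ∂(expMeasure r) = ∫⁻ x in s, exponentialPDF r x * g x := by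
  rw [expMeasure_eq_withDensity,
    setLIntegral_withDensity_eq_setLIntegral_mul _ (measurable_exponentialPDF r) hg hs]
  rfl

lemma sum1 {α β : ℝ} (hα : 0 < α) (hβ : 0 < β) (μ : Measure ℝ) :
    (∫⁻ x, exponentialPDF α x * cdfE β x ∂μ)
      + ENNReal.ofReal (α / (α + β)) * ∫⁻ x, exponentialPDF (α + β) x ∂μ
      = ∫⁻ x, exponentialPDF α x ∂μ := by
  rw [← lintegral_const_mul _ (measurable_exponentialPDF _),
    ← lintegral_add_right _ ((measurable_exponentialPDF _).const_mul _)]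
  exact lintegral_congr fun x => pt1 hα hβ x

lemma sum2 {α β a : ℝ} (hα : 0 < α) (hβ : 0 < β) (ha : 0 ≤ a) :
    (∫⁻ t, exponentialPDF (α + β) t * cdfE α (a - t))
      + ENNReal.ofReal ((α + β) / β * rexp (-(α * a))) * ∫⁻ t in Iic a, exponentialPDF β t
      = ∫⁻ t in Iic a, exponentialPDF (α + β) t := by
  rw [← lintegral_indicator measurableSet_Iic, ← lintegral_indicator measurableSet_Iic,
    ← lintegral_const_mul _ ((measurable_exponentialPDF β).indicator measurableSet_Iic),
    ← lintegral_add_right _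
      (((measurable_exponentialPDF β).indicator measurableSet_Iic).const_mul _)]
  exact lintegral_congr fun t => pt2 hα hβ ha t

/-- If `X ~ Exp α` and `Y ~ Exp β` are independent, then the conditional law
of `X` given `{X ≥ Y}` is `Exp(α+β) ⋆ Exp(α)`. -/
theorem condLaw_given_ge_eq_conv
    {Ω : Type*} [MeasurableSpace Ω] (P : Measure Ω) [IsProbabilityMeasure P]
    (α β : ℝ) (hα : 0 < α) (hβ : 0 < β)
    (X Y : Ω → ℝ) (hX : Measurable X) (hY : Measurable Y)
    (hindep : IndepFun X Y P)
    (hXlaw : P.map X = expMeasure α) (hYlaw : P.map Y = expMeasure β) :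
    (P[|{ω | Y ω ≤ X ω}]).map X = (expMeasure (α + β)).conv (expMeasure α) := by
  have hab : (0:ℝ) < α + β := by linarith
  haveI hPα : IsProbabilityMeasure (expMeasure α) := isProbabilityMeasure_expMeasure hα
  haveI hPβ : IsProbabilityMeasure (expMeasure β) := isProbabilityMeasure_expMeasure hβ
  haveI hPab : IsProbabilityMeasure (expMeasure (α + β)) := isProbabilityMeasure_expMeasure hab
  set A : Set Ω := {ω | Y ω ≤ X ω} with hAdef
  have hAm : MeasurableSet A := measurableSet_le hY hX
  have hmap : P.map (fun ω => (X ω, Y ω)) = (expMeasure α).prod (expMeasure β) := by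
    rw [← hXlaw, ← hYlaw]
    exact (indepFun_iff_map_prod_eq_prod_map_map hX.aemeasurable hY.aemeasurable).mp hindep
  have key : ∀ s : Set ℝ, MeasurableSet s →
      P (X ⁻¹' s ∩ A) = ∫⁻ x in s, exponentialPDF α x * cdfE β x := by
    intro s hs
    have hSm : MeasurableSet {p : ℝ × ℝ | p.1 ∈ s ∧ p.2 ≤ p.1} :=
      (measurable_fst hs).inter (measurableSet_le measurable_snd measurable_fst)
    have h1 : X ⁻¹' s ∩ A = (fun ω => (X ω, Y ω)) ⁻¹' {p : ℝ × ℝ | p.1 ∈ s ∧ p.2 ≤ p.1} := by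
      ext ω
      simp only [Set.mem_inter_iff, Set.mem_preimage, Set.mem_setOf_eq, hAdef]
    have h2 : ∀ x : ℝ, (expMeasure β) (Prod.mk x ⁻¹' {p : ℝ × ℝ | p.1 ∈ s ∧ p.2 ≤ p.1})
        = s.indicator (cdfE β) x := by
      intro x
      by_cases hx : x ∈ s
      · rw [Set.indicator_of_mem hx, ← expMeasure_Iic hβ x]
        congr 1
        ext y
        simp [hx]
      · rw [Set.indicator_of_notMem hx, ← measure_empty (μ := expMeasure β)]
        congr 1
        ext y
        simp [hx]
    rw [h1, ← Measure.map_apply (hX.prodMk hY) hSm, hmap, Measure.prod_apply hSm,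
      lintegral_congr h2, lintegral_indicator hs,
      setLIntegral_expMeasure (measurable_cdfE β) hs]
  have hPA : P A = ENNReal.ofReal (β / (α + β)) := by
    have h0 : P A = ∫⁻ x, exponentialPDF α x * cdfE β x := by
      have h := key univ MeasurableSet.univ
      simpa using h
    have h1 := sum1 hα hβ (volume : Measure ℝ)
    rw [lintegral_exponentialPDF_eq_one hab, lintegral_exponentialPDF_eq_one hα, mul_one] at h1
    have h2 : P A + ENNReal.ofReal (α / (α + β)) = 1 := by rw [h0]; exact h1
    refine enn_cancel ENNReal.ofReal_ne_top h2 ?_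
    rw [← ENNReal.ofReal_add (by positivity) (by positivity),
      show β / (α + β) + α / (α + β) = 1 by field_simp; ring]
    exact ENNReal.ofReal_one
  have hPAne : P A ≠ 0 := by
    rw [hPA, Ne, ENNReal.ofReal_eq_zero, not_le]
    positivity
  haveI : IsProbabilityMeasure (P[|A]) := cond_isProbabilityMeasure hPAne
  haveI : IsProbabilityMeasure ((P[|A]).map X) := Measure.isProbabilityMeasure_map hX.aemeasurable
  refine Measure.ext_of_Iic _ _ fun a => ?_
  have hconv : ((expMeasure (α + β)).conv (expMeasure α)) (Iic a)
      = ∫⁻ t, exponentialPDF (α + β) t * cdfE α (a - t) := by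
    have hadd : Measurable fun p : ℝ × ℝ => p.1 + p.2 := measurable_add
    have h3 : ∀ t : ℝ,
        (expMeasure α) (Prod.mk t ⁻¹' ((fun p : ℝ × ℝ => p.1 + p.2) ⁻¹' Iic a))
          = cdfE α (a - t) := by
      intro t
      rw [← expMeasure_Iic hα (a - t)]
      congr 1
      ext y
      simp only [Set.mem_preimage, Set.mem_Iic]
      constructor <;> intro h <;> linarith
    rw [show (expMeasure (α + β)).conv (expMeasure α)
        = Measure.map (fun p : ℝ × ℝ => p.1 + p.2) ((expMeasure (α + β)).prod (expMeasure α))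
        from rfl,
      Measure.map_apply hadd measurableSet_Iic,
      Measure.prod_apply (hadd measurableSet_Iic), lintegral_congr h3]
    have hg : Measurable fun t : ℝ => cdfE α (a - t) :=
      (measurable_cdfE α).comp (measurable_const.sub measurable_id)
    exact lintegral_expMeasure hg
  rw [Measure.map_apply hX measurableSet_Iic, cond_apply hAm, Set.inter_comm,
    key _ measurableSet_Iic, hconv]
  by_cases ha : 0 ≤ a
  · have hL : ∫⁻ x in Iic a, exponentialPDF α x * cdfE β x
        = ENNReal.ofReal ((1 - rexp (-(α * a))) - α / (α + β) * (1 - rexp (-((α + β) * a)))) := by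
      have h1 := sum1 hα hβ (volume.restrict (Iic a))
      rw [lintegral_exponentialPDF_eq_antiDeriv hα a, lintegral_exponentialPDF_eq_antiDeriv hab a,
        ← ENNReal.ofReal_mul (by positivity)] at h1
      simp only [if_pos ha] at h1
      rw [ENNReal.eq_sub_of_add_eq ENNReal.ofReal_ne_top h1,
        ← ENNReal.ofReal_sub _ (mul_nonneg (by positivity) (one_sub_exp_nonneg hab.le ha))]
    have hR : ∫⁻ t, exponentialPDF (α + β) t * cdfE α (a - t)
        = ENNReal.ofReal ((1 - rexp (-((α + β) * a)))
            - (α + β) / β * rexp (-(α * a)) * (1 - rexp (-(β * a)))) := by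
      have h2 := sum2 hα hβ ha (a := a)
      rw [lintegral_exponentialPDF_eq_antiDeriv hβ a, lintegral_exponentialPDF_eq_antiDeriv hab a,
        ← ENNReal.ofReal_mul (by positivity)] at h2
      simp only [if_pos ha] at h2
      rw [ENNReal.eq_sub_of_add_eq ENNReal.ofReal_ne_top h2,
        ← ENNReal.ofReal_sub _ (mul_nonneg (by positivity) (one_sub_exp_nonneg hβ.le ha))]
    rw [hL, hR, hPA, ← ENNReal.ofReal_inv_of_pos (by positivity),
      ← ENNReal.ofReal_mul (by positivity)]
    congr 1
    have hE : rexp (-((α + β) * a)) = rexp (-(α * a)) * rexp (-(β * a)) := by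
      rw [← exp_add]; ring_nf
    have hb0 : β ≠ 0 := ne_of_gt hβ
    have hab0 : α + β ≠ 0 := ne_of_gt hab
    rw [hE]
    field_simp
    ring
  · push_neg at ha
    have hL0 : ∫⁻ x in Iic a, exponentialPDF α x * cdfE β x = 0 := by
      rw [setLIntegral_congr_fun measurableSet_Iic (fun x (hx : x ≤ a) => by
        rw [exponentialPDF_of_neg (lt_of_le_of_lt hx ha), zero_mul]), lintegral_zero]
    have hR0 : ∫⁻ t, exponentialPDF (α + β) t * cdfE α (a - t) = 0 := by
      have hz : ∀ t : ℝ, exponentialPDF (α + β) t * cdfE α (a - t) = 0 := by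
        intro t
        by_cases ht : 0 ≤ t
        · rw [cdfE, if_neg (by linarith), ENNReal.ofReal_zero, mul_zero]
        · rw [exponentialPDF_of_neg (lt_of_not_ge ht), zero_mul]
      rw [lintegral_congr hz, lintegral_zero]
    rw [hL0, hR0, mul_zero]
end

section
/- For every integer n ≥ 0, P(Δ_n) = C_n · λ^n · μ^{n+1} / (λ+μ)^{2n+1}; that is, the probability that a busy period of the M/M/1 queue consists of exactly n+1 customers equals C_n λ^n μ^{n+1} / (λ+μ)^{2n+1}. -/
open MeasureTheory ProbabilityTheory

namespace BusyAux

open Real MeasureTheory Set Filter Topology ProbabilityTheory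
open scoped ENNReal NNReal



/-- Ballot-type triangle counting busy-period paths. -/
def MM : ℕ → ℕ → ℕ
  | 0, m => if m = 0 then 1 else 0
  | n+1, m => if 1 ≤ m then ∑ k ∈ Finset.Icc (m-1) n, MM n k else 0

lemma MM_succ (n m : ℕ) :
    MM (n+1) m = if 1 ≤ m then ∑ k ∈ Finset.Icc (m-1) n, MM n k else 0 := rfl

lemma MM_closed (n : ℕ) : ∀ m ≤ n + 1,
    (MM (n+1) m : ℤ) = ((2*n+1-m).choose n : ℤ) - ((2*n+1-m).choose (n+1) : ℤ) := by
  induction n with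
  | zero =>
    intro m hm
    interval_cases m <;> simp [MM]
  | succ n IH =>
    intro m hm
    rcases Nat.eq_zero_or_pos m with hm0 | hm1
    · subst hm0
      rw [MM_succ]
      rw [show (2*(n+1)+1-0) = 2*n+3 from by omega]
      have hsymm : (2*n+3).choose (n+2) = (2*n+3).choose (n+1) := by
        have := Nat.choose_symm (show n+1 ≤ 2*n+3 by omega)
        rw [show 2*n+3-(n+1) = n+2 from by omega] at this
        exact this
      simp [hsymm]
    · rw [MM_succ, if_pos (show 1 ≤ m from hm1),
        show (2*(n+1)+1-m) = 2*n+3-m from by omega]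
      push_cast
      have hcast : ∀ k ∈ Finset.Icc (m-1) (n+1),
          (MM (n+1) k : ℤ) = ((2*n+1-k).choose n : ℤ) - ((2*n+1-k).choose (n+1) : ℤ) := by
        intro k hk
        exact IH k (by simpa using (Finset.mem_Icc.mp hk).2)
      rw [Finset.sum_congr rfl hcast]
      have hre : ∑ k ∈ Finset.Icc (m-1) (n+1),
            (((2*n+1-k).choose n : ℤ) - ((2*n+1-k).choose (n+1) : ℤ))
          = ∑ i ∈ Finset.Icc n (2*n+2-m), ((i.choose n : ℤ) - (i.choose (n+1) : ℤ)) := by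
        refine Finset.sum_nbij' (fun k => 2*n+1-k) (fun i => 2*n+1-i) ?_ ?_ ?_ ?_ ?_
        · intro a ha
          simp only [Finset.mem_Icc] at ha ⊢
          omega
        · intro a ha
          simp only [Finset.mem_Icc] at ha ⊢
          omega
        · intro a ha
          simp only [Finset.mem_Icc] at ha
          show 2*n+1-(2*n+1-a) = a
          omega
        · intro a ha
          simp only [Finset.mem_Icc] at ha
          show 2*n+1-(2*n+1-a) = a
          omega
        · intro a ha
          rfl
      rw [hre, Finset.sum_sub_distrib]
      have hK : n ≤ 2*n+2-m := by omega
      have h1 : ∑ i ∈ Finset.Icc n (2*n+2-m), (i.choose n : ℤ)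
          = ((2*n+3-m).choose (n+1) : ℤ) := by
        rw [← Nat.cast_sum]
        norm_cast
        rw [Nat.sum_Icc_choose (2*n+2-m) n,
          show (2*n+2-m)+1 = 2*n+3-m from by omega]
      have h2 : ∑ i ∈ Finset.Icc n (2*n+2-m), (i.choose (n+1) : ℤ)
          = ((2*n+3-m).choose (n+2) : ℤ) := by
        have hIoc : ∑ i ∈ Finset.Ioc n (2*n+2-m), (i.choose (n+1) : ℤ)
            = ((2*n+3-m).choose (n+2) : ℤ) := by
          rw [show Finset.Ioc n (2*n+2-m) = Finset.Icc (n+1) (2*n+2-m) from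
            (Finset.Icc_add_one_left_eq_Ioc _ _).symm, ← Nat.cast_sum,
            Nat.sum_Icc_choose (2*n+2-m) (n+1),
            show (2*n+2-m)+1 = 2*n+3-m from by omega]
        rw [Finset.Icc_eq_cons_Ioc hK, Finset.sum_cons, hIoc]
        simp [Nat.choose_succ_self]
      rw [h1, h2]

lemma MM_sum (n : ℕ) : (∑ m ∈ Finset.range (n+1), MM n m) = catalan n := by
  cases n with
  | zero => simp [MM]
  | succ n =>
    have key : (∑ m ∈ Finset.range (n+2), (MM (n+1) m : ℤ)) = (catalan (n+1) : ℤ) := by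
      have hcast : ∀ m ∈ Finset.range (n+2),
          (MM (n+1) m : ℤ) = ((2*n+1-m).choose n : ℤ) - ((2*n+1-m).choose (n+1) : ℤ) := by
        intro m hm
        exact MM_closed n m (by simpa using Nat.lt_succ_iff.mp (Finset.mem_range.mp hm))
      rw [Finset.sum_congr rfl hcast]
      have hre : ∑ m ∈ Finset.range (n+2),
            (((2*n+1-m).choose n : ℤ) - ((2*n+1-m).choose (n+1) : ℤ))
          = ∑ i ∈ Finset.Icc n (2*n+1), ((i.choose n : ℤ) - (i.choose (n+1) : ℤ)) := by
        refine Finset.sum_nbij' (fun k => 2*n+1-k) (fun i => 2*n+1-i) ?_ ?_ ?_ ?_ ?_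
        · intro a ha
          simp only [Finset.mem_range] at ha
          simp only [Finset.mem_Icc]
          omega
        · intro a ha
          simp only [Finset.mem_Icc] at ha
          simp only [Finset.mem_range]
          omega
        · intro a ha
          simp only [Finset.mem_range] at ha
          show 2*n+1-(2*n+1-a) = a
          omega
        · intro a ha
          simp only [Finset.mem_Icc] at ha
          show 2*n+1-(2*n+1-a) = a
          omega
        · intro a ha
          rfl
      rw [hre, Finset.sum_sub_distrib]
      have h1 : ∑ i ∈ Finset.Icc n (2*n+1), (i.choose n : ℤ)
          = ((2*n+2).choose (n+1) : ℤ) := by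
        rw [← Nat.cast_sum]
        norm_cast
        exact Nat.sum_Icc_choose (2*n+1) n
      have h2 : ∑ i ∈ Finset.Icc n (2*n+1), (i.choose (n+1) : ℤ)
          = ((2*n+2).choose (n+2) : ℤ) := by
        have hIoc : ∑ i ∈ Finset.Ioc n (2*n+1), (i.choose (n+1) : ℤ)
            = ((2*n+2).choose (n+2) : ℤ) := by
          rw [show Finset.Ioc n (2*n+1) = Finset.Icc (n+1) (2*n+1) from
            (Finset.Icc_add_one_left_eq_Ioc _ _).symm, ← Nat.cast_sum,
            Nat.sum_Icc_choose (2*n+1) (n+1)]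
        rw [Finset.Icc_eq_cons_Ioc (by omega), Finset.sum_cons, hIoc]
        simp [Nat.choose_succ_self]
      rw [h1, h2]
      have h' : (n+2) * catalan (n+1) = (2*n+2).choose (n+1) := by
        have h := succ_mul_catalan_eq_centralBinom (n+1)
        rw [Nat.centralBinom_eq_two_mul_choose] at h
        rw [show 2*(n+1) = 2*n+2 from by omega] at h
        exact h
      have hch : (2*n+2).choose (n+2) * (n+2) = (2*n+2).choose (n+1) * (n+1) := by
        have h := Nat.choose_succ_right_eq (2*n+2) (n+1)
        rw [show 2*n+2 - (n+1) = n+1 from by omega] at h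
        exact h
      have hcb' : ((n:ℤ)+2) * (catalan (n+1) : ℤ) = ((2*n+2).choose (n+1) : ℤ) := by
        exact_mod_cast congrArg (Nat.cast (R := ℤ)) h'
      have hch' : ((2*n+2).choose (n+2) : ℤ) * ((n:ℤ)+2)
          = ((2*n+2).choose (n+1) : ℤ) * ((n:ℤ)+1) := by
        exact_mod_cast congrArg (Nat.cast (R := ℤ)) hch
      have hne : ((n:ℤ)+2) ≠ 0 := by positivity
      refine mul_left_cancel₀ hne ?_
      rw [mul_sub, hcb']
      linarith [hch']
    have key' := key
    rw [← Nat.cast_sum] at key'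
    exact_mod_cast key'



/-! ### Incomplete gamma integrals -/

/-- `Jsum s k y = ∑_{i ≤ k} (k!/i!) y^i / s^(k+1-i)`, so that
`-exp (-(s*y)) * Jsum s k y` is an antiderivative of `y^k * exp (-(s*y))`. -/
noncomputable def Jsum (s : ℝ) (k : ℕ) (y : ℝ) : ℝ :=
  ∑ i ∈ Finset.range (k+1), ((k.factorial : ℝ) / (i.factorial : ℝ)) * y ^ i / s ^ (k+1-i)

lemma hasDerivAt_Jexp (s : ℝ) (hs : 0 < s) (k : ℕ) (y : ℝ) :
    HasDerivAt (fun y => -(Real.exp (-(s*y)) * Jsum s k y))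
      (y ^ k * Real.exp (-(s*y))) y := by
  have hexp : HasDerivAt (fun y => Real.exp (-(s*y))) (-s * Real.exp (-(s*y))) y := by
    have h1 : HasDerivAt (fun y : ℝ => -(s*y)) (-s) y := by
      simpa using ((hasDerivAt_id y).const_mul (-s))
    simpa [mul_comm] using h1.exp
  have hJ : HasDerivAt (Jsum s k)
      (∑ i ∈ Finset.range (k+1),
        ((k.factorial : ℝ) / (i.factorial : ℝ)) * (i * y ^ (i-1)) / s ^ (k+1-i)) y := by
    apply HasDerivAt.fun_sum
    intro i _
    have h1 : HasDerivAt (fun y : ℝ => y ^ i) (i * y ^ (i-1)) y := hasDerivAt_pow i y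
    simpa [mul_div_assoc, mul_comm, mul_left_comm] using
      ((h1.const_mul ((k.factorial : ℝ) / (i.factorial : ℝ))).div_const (s ^ (k+1-i)))
  have := (hexp.mul hJ).neg
  refine this.congr_deriv (Eq.symm ?_)
  have hkey : s * Jsum s k y
      - (∑ i ∈ Finset.range (k+1),
          ((k.factorial : ℝ) / (i.factorial : ℝ)) * (i * y ^ (i-1)) / s ^ (k+1-i))
      = y ^ k := by
    have hsS : s * Jsum s k y
        = ∑ i ∈ Finset.range (k+1),
            ((k.factorial : ℝ) / (i.factorial : ℝ)) * y ^ i / s ^ (k-i) := by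
      rw [Jsum, Finset.mul_sum]
      refine Finset.sum_congr rfl fun i hi => ?_
      have hik : i ≤ k := Nat.lt_succ_iff.mp (Finset.mem_range.mp hi)
      have hpow : s ^ (k+1-i) = s ^ (k-i) * s := by
        rw [← pow_succ]
        congr 1
        omega
      field_simp [hpow]
      rw [hpow]; ring
    have hD : (∑ i ∈ Finset.range (k+1),
          ((k.factorial : ℝ) / (i.factorial : ℝ)) * (i * y ^ (i-1)) / s ^ (k+1-i))
        = ∑ i ∈ Finset.range k,
            ((k.factorial : ℝ) / (i.factorial : ℝ)) * y ^ i / s ^ (k-i) := by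
      rw [Finset.sum_range_succ']
      simp only [Nat.cast_zero, zero_mul, mul_zero, zero_div, add_zero]
      refine Finset.sum_congr rfl fun i hi => ?_
      have : ((k.factorial : ℝ) / ((i+1).factorial : ℝ)) * ((i+1) * y ^ i)
          = ((k.factorial : ℝ) / (i.factorial : ℝ)) * y ^ i := by
        rw [Nat.factorial_succ]
        push_cast
        have h1 : (i.factorial : ℝ) ≠ 0 := by positivity
        field_simp
      rw [show (k+1-(i+1)) = k - i from by omega]
      rw [show (((i+1:ℕ)):ℝ) * y ^ (i+1-1) = ((i:ℝ)+1) * y ^ i from by push_cast; norm_num]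
      rw [this]
    rw [hsS, hD, Finset.sum_range_succ]
    have hkf : (k.factorial : ℝ) ≠ 0 := by positivity
    rw [Nat.sub_self, pow_zero, div_self hkf]
    ring
  calc y ^ k * Real.exp (-(s*y))
      = Real.exp (-(s*y)) * (s * Jsum s k y
        - ∑ i ∈ Finset.range (k+1),
            ((k.factorial : ℝ) / (i.factorial : ℝ)) * (i * y ^ (i-1)) / s ^ (k+1-i)) := by
        rw [hkey]; ring
    _ = -(-s * Real.exp (-(s*y)) * Jsum s k y
          + Real.exp (-(s*y)) * ∑ i ∈ Finset.range (k+1),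
            ((k.factorial : ℝ) / (i.factorial : ℝ)) * (i * y ^ (i-1)) / s ^ (k+1-i)) := by
        ring

lemma tendsto_Jexp (s : ℝ) (hs : 0 < s) (k : ℕ) :
    Tendsto (fun y => -(Real.exp (-(s*y)) * Jsum s k y)) atTop (𝓝 0) := by
  have h1 : ∀ i : ℕ, Tendsto (fun y : ℝ => y ^ i * Real.exp (-(s*y))) atTop (𝓝 0) := by
    intro i
    have hcomp : Tendsto (fun y : ℝ => s * y) atTop atTop :=
      Tendsto.const_mul_atTop hs tendsto_id
    have := (Real.tendsto_pow_mul_exp_neg_atTop_nhds_zero i).comp hcomp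
    have heq : (fun y : ℝ => (s*y) ^ i * Real.exp (-(s*y)))
        = fun y : ℝ => s ^ i * (y ^ i * Real.exp (-(s*y))) := by
      funext y
      rw [mul_pow]
      ring
    rw [Function.comp_def] at this
    rw [heq] at this
    have hsne : (s : ℝ) ^ i ≠ 0 := by positivity
    have := this.const_mul (s ^ i)⁻¹
    simpa [← mul_assoc, inv_mul_cancel₀ hsne] using this
  have : Tendsto (fun y : ℝ => Real.exp (-(s*y)) * Jsum s k y) atTop (𝓝 0) := by
    have heq : (fun y : ℝ => Real.exp (-(s*y)) * Jsum s k y)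
        = fun y => ∑ i ∈ Finset.range (k+1),
            ((k.factorial : ℝ) / (i.factorial : ℝ) / s ^ (k+1-i)) * (y ^ i * Real.exp (-(s*y))) := by
      funext y
      rw [Jsum, Finset.mul_sum]
      refine Finset.sum_congr rfl fun i _ => ?_
      ring
    rw [heq]
    have : Tendsto (fun y : ℝ => ∑ i ∈ Finset.range (k+1),
        ((k.factorial : ℝ) / (i.factorial : ℝ) / s ^ (k+1-i)) * (y ^ i * Real.exp (-(s*y))))
        atTop (𝓝 (∑ i ∈ Finset.range (k+1), ((k.factorial : ℝ) / (i.factorial : ℝ) / s ^ (k+1-i)) * 0)) := by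
      exact tendsto_finset_sum _ fun i _ => (h1 i).const_mul _
    simpa using this
  simpa using this.neg

lemma J_integrableOn (s : ℝ) (hs : 0 < s) (k : ℕ) {x : ℝ} (hx : 0 ≤ x) :
    IntegrableOn (fun y => y ^ k * Real.exp (-(s*y))) (Ioi x) := by
  refine integrableOn_Ioi_deriv_of_nonneg ?_ (fun y _ => hasDerivAt_Jexp s hs k y) ?_
    (tendsto_Jexp s hs k)
  · exact ((continuous_exp.comp (by continuity)).mul (by
      unfold Jsum
      exact continuous_finset_sum _ fun i _ => by continuity)).neg.continuousWithinAt
  · intro y hy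
    have hy0 : 0 ≤ y := le_of_lt (lt_of_le_of_lt hx hy)
    positivity

lemma J_eq (s : ℝ) (hs : 0 < s) (k : ℕ) {x : ℝ} (hx : 0 ≤ x) :
    ∫ y in Ioi x, y ^ k * Real.exp (-(s*y)) = Real.exp (-(s*x)) * Jsum s k x := by
  have := integral_Ioi_of_hasDerivAt_of_nonneg
    (g := fun y => -(Real.exp (-(s*y)) * Jsum s k y))
    (g' := fun y => y ^ k * Real.exp (-(s*y)))
    (a := x) (l := 0)
    (((continuous_exp.comp (by continuity)).mul (by
      unfold Jsum
      exact continuous_finset_sum _ fun i _ => by continuity)).neg.continuousWithinAt)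
    (fun y _ => hasDerivAt_Jexp s hs k y)
    (fun y hy => by
      have hy0 : 0 ≤ y := le_of_lt (lt_of_le_of_lt hx hy)
      positivity)
    (tendsto_Jexp s hs k)
  rw [this]
  ring

lemma lint_J (s : ℝ) (hs : 0 < s) (k : ℕ) {x : ℝ} (hx : 0 ≤ x) :
    ∫⁻ y in Ioi x, ENNReal.ofReal (y ^ k * Real.exp (-(s*y)))
      = ENNReal.ofReal (Real.exp (-(s*x)) * Jsum s k x) := by
  rw [← ofReal_integral_eq_lintegral_ofReal (J_integrableOn s hs k hx) ?_]
  · rw [J_eq s hs k hx]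
  · filter_upwards [ae_restrict_mem measurableSet_Ioi] with y hy
    have hy0 : 0 ≤ y := le_of_lt (lt_of_le_of_lt hx hy)
    positivity

/-! ### Gamma densities with integer shape -/

/-- Density of the Gamma distribution with shape `m+1` and rate `mu`. -/
noncomputable def gpdf (mu : ℝ) (m : ℕ) (x : ℝ) : ℝ :=
  mu ^ (m+1) * x ^ m * Real.exp (-(mu*x)) / m.factorial

lemma gpdf_nonneg {mu : ℝ} (hmu : 0 < mu) (m : ℕ) {x : ℝ} (hx : 0 ≤ x) :
    0 ≤ gpdf mu m x := by
  unfold gpdf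
  positivity

@[measurability, fun_prop]
lemma measurable_gpdf (mu : ℝ) (m : ℕ) : Measurable (gpdf mu m) := by
  unfold gpdf
  fun_prop

/-! ### Shift and swap lemmas for Lebesgue integrals -/

lemma lintegral_Ioi_shift (g : ℝ → ℝ≥0∞) (u : ℝ) :
    ∫⁻ t in Set.Ioi (0:ℝ), g (t + u) = ∫⁻ y in Set.Ioi u, g y := by
  have hmp : MeasurePreserving (fun t : ℝ => t + u)
      (volume.restrict ((fun t : ℝ => t + u) ⁻¹' (Set.Ioi u))) (volume.restrict (Set.Ioi u)) :=
    (measurePreserving_add_right volume u).restrict_preimage measurableSet_Ioi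
  have hpre : ((fun t : ℝ => t + u) ⁻¹' (Set.Ioi u)) = Set.Ioi (0:ℝ) := by
    ext t
    simp
  rw [hpre] at hmp
  exact hmp.lintegral_comp_emb (MeasurableEquiv.addRight u).measurableEmbedding g

/-- The basic combination of Tonelli and translation invariance used for
convolution-type computations. -/
lemma swap_shift (W : ℝ → ℝ → ℝ≥0∞) (hW : Measurable (Function.uncurry W)) :
    ∫⁻ x in Set.Ioi (0:ℝ), ∫⁻ t in Set.Ioi (0:ℝ), (if t < x then W t x else 0)
      = ∫⁻ t in Set.Ioi (0:ℝ), ∫⁻ u in Set.Ioi (0:ℝ), W t (t + u) := by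
  have hmeas : Measurable (Function.uncurry fun x t => if t < x then W t x else 0) := by
    have heq : (Function.uncurry fun x t => if t < x then W t x else 0)
        = fun z : ℝ × ℝ => if z.2 < z.1 then W z.2 z.1 else 0 := rfl
    have h1 : Measurable (fun z : ℝ × ℝ => W z.2 z.1) := hW.comp measurable_swap
    have h2 : MeasurableSet {z : ℝ × ℝ | z.2 < z.1} :=
      measurableSet_lt measurable_snd measurable_fst
    rw [heq]
    exact Measurable.ite h2 h1 measurable_const
  rw [lintegral_lintegral_swap hmeas.aemeasurable]
  refine setLIntegral_congr_fun_ae measurableSet_Ioi (ae_of_all _ fun t ht => ?_)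
  have h1 : ∫⁻ x in Set.Ioi (0:ℝ), (if t < x then W t x else 0)
      = ∫⁻ x in Set.Ioi t, W t x := by
    have hind : (fun x => if t < x then W t x else 0) = (Set.Ioi t).indicator (W t) := by
      funext x
      simp [Set.indicator_apply, Set.mem_Ioi]
    rw [hind, lintegral_indicator measurableSet_Ioi,
      Measure.restrict_restrict measurableSet_Ioi,
      Set.inter_eq_left.mpr (Set.Ioi_subset_Ioi (le_of_lt ht))]
  rw [h1, ← lintegral_Ioi_shift (W t) t]
  exact lintegral_congr fun u => by rw [add_comm]

/-! ### Lebesgue integral against `expMeasure` -/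

lemma lint_expMeasure {r : ℝ} (hr : 0 < r) (f : ℝ → ℝ≥0∞) (hf : Measurable f) :
    ∫⁻ x, f x ∂(expMeasure r)
      = ∫⁻ x in Set.Ioi (0:ℝ), ENNReal.ofReal (r * Real.exp (-(r*x))) * f x := by
  have hd : Measurable (exponentialPDF r) :=
    (measurable_exponentialPDFReal r).ennreal_ofReal
  rw [show expMeasure r = volume.withDensity (exponentialPDF r) from rfl,
    lintegral_withDensity_eq_lintegral_mul _ hd hf]
  rw [← lintegral_add_compl (fun x => (exponentialPDF r * f) x) (measurableSet_Iio (a := (0:ℝ)))]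
  have hIio0 : ∫⁻ x in Set.Iio (0:ℝ), (exponentialPDF r * f) x = 0 := by
    have h0 : ∫⁻ x in Set.Iio (0:ℝ), (exponentialPDF r * f) x
        = ∫⁻ _x in Set.Iio (0:ℝ), (0:ℝ≥0∞) := by
      refine setLIntegral_congr_fun_ae measurableSet_Iio (ae_of_all _ fun x hx => ?_)
      simp [Pi.mul_apply, exponentialPDF_of_neg (Set.mem_Iio.mp hx)]
    rw [h0]
    simp
  rw [hIio0, zero_add, show (Set.Iio (0:ℝ))ᶜ = Set.Ici 0 from compl_Iio,
    ← MeasureTheory.restrict_Ioi_eq_restrict_Ici]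
  refine setLIntegral_congr_fun_ae measurableSet_Ioi (ae_of_all _ fun x hx => ?_)
  rw [Pi.mul_apply, exponentialPDF_of_nonneg (le_of_lt (Set.mem_Ioi.mp hx))]

/-! ### Pointwise convolution identities -/

/-- `(P1)`: integrating out an exponential of rate `lam` against a shifted Gamma density. -/
lemma lint_P1 {lam mu : ℝ} (hlam : 0 < lam) (hmu : 0 < mu) (m : ℕ) {u : ℝ} (hu : 0 ≤ u) :
    ∫⁻ t in Set.Ioi (0:ℝ), ENNReal.ofReal (lam * Real.exp (-(lam*t)) * gpdf mu m (t+u))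
      = ∑ i ∈ Finset.range (m+1),
          ENNReal.ofReal ((lam/(lam+mu)) * (mu/(lam+mu))^(m-i) * gpdf mu i u) := by
  have hs : 0 < lam + mu := by linarith
  set s := lam + mu with hsdef
  have hexps : ∀ t : ℝ, Real.exp (-(lam*t)) * Real.exp (-(mu*(t+u)))
      = Real.exp (lam*u) * Real.exp (-(s*(t+u))) := by
    intro t
    rw [← Real.exp_add, ← Real.exp_add]
    congr 1
    rw [hsdef]
    ring
  have hpoint : ∀ t : ℝ, lam * Real.exp (-(lam*t)) * gpdf mu m (t+u)
      = (lam * mu^(m+1) / m.factorial * Real.exp (lam*u)) * ((t+u)^m * Real.exp (-(s*(t+u)))) := by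
    intro t
    calc lam * Real.exp (-(lam*t)) * gpdf mu m (t+u)
        = lam * mu^(m+1) / m.factorial * (t+u)^m
            * (Real.exp (-(lam*t)) * Real.exp (-(mu*(t+u)))) := by
          unfold gpdf
          ring
      _ = lam * mu^(m+1) / m.factorial * (t+u)^m
            * (Real.exp (lam*u) * Real.exp (-(s*(t+u)))) := by rw [hexps t]
      _ = (lam * mu^(m+1) / m.factorial * Real.exp (lam*u))
            * ((t+u)^m * Real.exp (-(s*(t+u)))) := by ring
  calc ∫⁻ t in Set.Ioi (0:ℝ), ENNReal.ofReal (lam * Real.exp (-(lam*t)) * gpdf mu m (t+u))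
      = ∫⁻ t in Set.Ioi (0:ℝ), ENNReal.ofReal (lam * mu^(m+1) / m.factorial * Real.exp (lam*u))
          * ENNReal.ofReal ((t+u)^m * Real.exp (-(s*(t+u)))) := by
        refine setLIntegral_congr_fun_ae measurableSet_Ioi (ae_of_all _ fun t ht => ?_)
        rw [hpoint t, ENNReal.ofReal_mul (by positivity)]
    _ = ENNReal.ofReal (lam * mu^(m+1) / m.factorial * Real.exp (lam*u))
          * ∫⁻ t in Set.Ioi (0:ℝ), ENNReal.ofReal ((t+u)^m * Real.exp (-(s*(t+u)))) := by
        rw [lintegral_const_mul]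
        exact (((measurable_id.add_const u).pow_const m).mul
          ((measurable_id.add_const u).const_mul s).neg.exp).ennreal_ofReal
    _ = ENNReal.ofReal (lam * mu^(m+1) / m.factorial * Real.exp (lam*u))
          * ENNReal.ofReal (Real.exp (-(s*u)) * Jsum s m u) := by
        rw [lintegral_Ioi_shift (fun y => ENNReal.ofReal (y^m * Real.exp (-(s*y)))) u,
          lint_J s hs m hu]
    _ = ENNReal.ofReal ((lam * mu^(m+1) / m.factorial * Real.exp (lam*u))
          * (Real.exp (-(s*u)) * Jsum s m u)) := by
        rw [← ENNReal.ofReal_mul (by positivity)]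
    _ = ∑ i ∈ Finset.range (m+1),
          ENNReal.ofReal ((lam/s) * (mu/s)^(m-i) * gpdf mu i u) := by
        rw [← ENNReal.ofReal_sum_of_nonneg (fun i _ => by
          have := gpdf_nonneg hmu i hu
          positivity)]
        congr 1
        rw [Jsum, Finset.mul_sum, Finset.mul_sum]
        refine Finset.sum_congr rfl fun i hi => ?_
        have hik : i ≤ m := Nat.lt_succ_iff.mp (Finset.mem_range.mp hi)
        have hfact : (i.factorial : ℝ) ≠ 0 := by positivity
        have hmfact : (m.factorial : ℝ) ≠ 0 := by positivity
        have hsne : s ≠ 0 := ne_of_gt hs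
        have hexp2 : Real.exp (lam*u) * Real.exp (-(s*u)) = Real.exp (-(mu*u)) := by
          rw [← Real.exp_add]
          congr 1
          rw [hsdef]
          ring
        have hpows : s ^ (m+1-i) = s ^ (m-i) * s := by
          rw [← pow_succ]
          congr 1
          omega
        have hpowmu : mu ^ (m+1) = mu ^ (m-i) * mu ^ (i+1) := by
          rw [← pow_add]
          congr 1
          omega
        calc lam * mu^(m+1) / m.factorial * Real.exp (lam*u)
              * (Real.exp (-(s*u)) * ((m.factorial : ℝ) / (i.factorial : ℝ) * u ^ i / s ^ (m+1-i)))
            = (Real.exp (lam*u) * Real.exp (-(s*u))) * ((m.factorial : ℝ) / (m.factorial : ℝ))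
                * (lam * mu^(m+1) * u ^ i / ((i.factorial : ℝ) * s ^ (m+1-i))) := by
              ring
          _ = Real.exp (-(mu*u)) * (lam * mu^(m+1) * u ^ i / ((i.factorial : ℝ) * s ^ (m+1-i))) := by
              rw [hexp2, div_self hmfact, mul_one]
          _ = (lam/s) * (mu/s)^(m-i) * gpdf mu i u := by
              unfold gpdf
              rw [div_pow, hpows, hpowmu]
              field_simp



/-- `(P2)`: convolving a Gamma density with an exponential density of the same rate. -/
lemma lint_P2 {mu : ℝ} (hmu : 0 < mu) (r : ℕ) {x : ℝ} (hx : 0 < x) :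
    ∫⁻ t in Ioi (0:ℝ),
        (if t < x then ENNReal.ofReal (gpdf mu r t * (mu * Real.exp (-(mu*(x-t))))) else 0)
      = ENNReal.ofReal (gpdf mu (r+1) x) := by
  have hind : (fun t => if t < x then ENNReal.ofReal (gpdf mu r t * (mu * Real.exp (-(mu*(x-t))))) else 0)
      = (Iio x).indicator (fun t => ENNReal.ofReal (gpdf mu r t * (mu * Real.exp (-(mu*(x-t)))))) := by
    funext t
    simp [Set.indicator_apply, Set.mem_Iio]
  rw [hind, lintegral_indicator measurableSet_Iio,
    Measure.restrict_restrict measurableSet_Iio, Set.Iio_inter_Ioi]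
  have hpoint : ∀ t ∈ Ioo (0:ℝ) x,
      ENNReal.ofReal (gpdf mu r t * (mu * Real.exp (-(mu*(x-t)))))
        = ENNReal.ofReal (mu^(r+2) * Real.exp (-(mu*x)) / r.factorial) * ENNReal.ofReal (t^r) := by
    intro t _
    rw [← ENNReal.ofReal_mul (by positivity)]
    congr 1
    have hexp : Real.exp (-(mu*t)) * Real.exp (-(mu*(x-t))) = Real.exp (-(mu*x)) := by
      rw [← Real.exp_add]
      congr 1
      ring
    calc gpdf mu r t * (mu * Real.exp (-(mu*(x-t))))
        = mu^(r+2) / r.factorial * t^r * (Real.exp (-(mu*t)) * Real.exp (-(mu*(x-t)))) := by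
          unfold gpdf
          ring
      _ = mu^(r+2) / r.factorial * t^r * Real.exp (-(mu*x)) := by rw [hexp]
      _ = mu^(r+2) * Real.exp (-(mu*x)) / r.factorial * t^r := by ring
  rw [setLIntegral_congr_fun_ae measurableSet_Ioo (ae_of_all _ hpoint), lintegral_const_mul _
    (by fun_prop)]
  have hint : ∫⁻ t in Ioo (0:ℝ) x, ENNReal.ofReal (t^r)
      = ENNReal.ofReal (x^(r+1) / (r+1)) := by
    rw [← ofReal_integral_eq_lintegral_ofReal]
    · congr 1
      rw [← integral_Ioc_eq_integral_Ioo, ← intervalIntegral.integral_of_le hx.le,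
        integral_pow]
      simp
    · exact ((continuous_pow r).integrableOn_Icc (a := 0) (b := x)).mono_set Ioo_subset_Icc_self
    · filter_upwards [ae_restrict_mem measurableSet_Ioo] with t ht
      exact pow_nonneg (le_of_lt ht.1) r
  rw [hint, ← ENNReal.ofReal_mul (by positivity)]
  congr 1
  unfold gpdf
  rw [Nat.factorial_succ]
  push_cast
  have h1 : (r.factorial : ℝ) ≠ 0 := by positivity
  field_simp

/-- Tail of the exponential distribution. -/
lemma lint_exp_tail {lam : ℝ} (hlam : 0 < lam) {x : ℝ} (hx : 0 < x) :
    ∫⁻ t in Ioi (0:ℝ), ENNReal.ofReal (lam * Real.exp (-(lam*t))) * (if x ≤ t then 1 else 0)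
      = ENNReal.ofReal (Real.exp (-(lam*x))) := by
  have hind : (fun t => ENNReal.ofReal (lam * Real.exp (-(lam*t))) * (if x ≤ t then 1 else 0))
      = (Ici x).indicator (fun t => ENNReal.ofReal (lam * Real.exp (-(lam*t)))) := by
    funext t
    by_cases h : x ≤ t <;> simp [Set.indicator_apply, Set.mem_Ici, h]
  rw [hind, lintegral_indicator measurableSet_Ici,
    Measure.restrict_restrict measurableSet_Ici,
    show Ici x ∩ Ioi 0 = Ici x from Set.inter_eq_left.mpr (fun t ht => lt_of_lt_of_le hx ht),
    ← MeasureTheory.restrict_Ioi_eq_restrict_Ici]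
  have hpoint : ∀ t ∈ Ioi x, ENNReal.ofReal (lam * Real.exp (-(lam*t)))
      = ENNReal.ofReal lam * ENNReal.ofReal (t^0 * Real.exp (-(lam*t))) := by
    intro t _
    rw [← ENNReal.ofReal_mul (le_of_lt hlam)]
    norm_num
  rw [setLIntegral_congr_fun_ae measurableSet_Ioi (ae_of_all _ hpoint),
    lintegral_const_mul _ (by fun_prop), lint_J lam hlam 0 (le_of_lt hx),
    ← ENNReal.ofReal_mul (le_of_lt hlam)]
  congr 1
  unfold Jsum
  simp only [zero_add, Nat.sub_zero, Finset.range_one, Finset.sum_singleton, Nat.factorial_zero, pow_zero, pow_one]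
  field_simp

/-- Integral of a Gamma density against the exponential tail. -/
lemma lint_gq {lam mu : ℝ} (hlam : 0 < lam) (hmu : 0 < mu) (m : ℕ) :
    ∫⁻ x in Ioi (0:ℝ), ENNReal.ofReal (gpdf mu m x) * ENNReal.ofReal (Real.exp (-(lam*x)))
      = ENNReal.ofReal ((mu/(lam+mu))^(m+1)) := by
  have hs : 0 < lam + mu := by linarith
  set s := lam + mu with hsdef
  have hpoint : ∀ x ∈ Ioi (0:ℝ),
      ENNReal.ofReal (gpdf mu m x) * ENNReal.ofReal (Real.exp (-(lam*x)))
        = ENNReal.ofReal (mu^(m+1) / m.factorial) * ENNReal.ofReal (x^m * Real.exp (-(s*x))) := by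
    intro x hx
    rw [← ENNReal.ofReal_mul (gpdf_nonneg hmu m (le_of_lt hx)),
      ← ENNReal.ofReal_mul (by positivity)]
    congr 1
    have hexp : Real.exp (-(mu*x)) * Real.exp (-(lam*x)) = Real.exp (-(s*x)) := by
      rw [← Real.exp_add]
      congr 1
      rw [hsdef]
      ring
    calc gpdf mu m x * Real.exp (-(lam*x))
        = mu^(m+1) / m.factorial * x^m * (Real.exp (-(mu*x)) * Real.exp (-(lam*x))) := by
          unfold gpdf
          ring
      _ = mu^(m+1) / m.factorial * x^m * Real.exp (-(s*x)) := by rw [hexp]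
      _ = mu^(m+1) / m.factorial * (x^m * Real.exp (-(s*x))) := by ring
  rw [setLIntegral_congr_fun_ae measurableSet_Ioi (ae_of_all _ hpoint),
    lintegral_const_mul _ (by fun_prop), lint_J s hs m le_rfl,
    ← ENNReal.ofReal_mul (by positivity)]
  congr 1
  have hJ0 : Jsum s m 0 = (m.factorial : ℝ) / s^(m+1) := by
    unfold Jsum
    rw [Finset.sum_eq_single 0]
    · simp
    · intro i _ hi
      rw [zero_pow hi]
      ring
    · intro h
      exact absurd (Finset.mem_range.mpr (Nat.succ_pos m)) h
  rw [hJ0]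
  have hmf : (m.factorial : ℝ) ≠ 0 := by positivity
  rw [div_pow]
  field_simp
  simp


/-! ### The convolution kernel and the key induction step -/

/-- The kernel describing one step of the workload chain: integrate out the next
inter-arrival time (rate `lam`) and the next service time (rate `mu`). -/
noncomputable def Kker (lam mu : ℝ) (F : ℝ → ℝ≥0∞) (d : ℝ) : ℝ≥0∞ :=
  ∫⁻ z : ℝ × ℝ, (if z.1 < d then F (d - z.1 + z.2) else 0)
    ∂((expMeasure lam).prod (expMeasure mu))

/-- Auxiliary kernel: integrate out only the service time. -/
noncomputable def K2 (mu : ℝ) (F : ℝ → ℝ≥0∞) (u : ℝ) : ℝ≥0∞ :=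
  ∫⁻ v in Ioi (0:ℝ), ENNReal.ofReal (mu * Real.exp (-(mu*v))) * F (u + v)

section Kernels

variable {lam mu : ℝ}

lemma measurable_Kker_integrand {F : ℝ → ℝ≥0∞} (hF : Measurable F) :
    Measurable (fun p : ℝ × (ℝ × ℝ) => if p.2.1 < p.1 then F (p.1 - p.2.1 + p.2.2) else 0) := by
  refine Measurable.ite ?_ ?_ measurable_const
  · exact measurableSet_lt (measurable_snd.fst) measurable_fst
  · exact hF.comp ((measurable_fst.sub measurable_snd.fst).add measurable_snd.snd)

lemma measurable_Kker (hlam : 0 < lam) (hmu : 0 < mu) {F : ℝ → ℝ≥0∞} (hF : Measurable F) :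
    Measurable (Kker lam mu F) := by
  haveI := isProbabilityMeasure_expMeasure hlam
  haveI := isProbabilityMeasure_expMeasure hmu
  unfold Kker
  exact Measurable.lintegral_prod_right (measurable_Kker_integrand hF)

lemma measurable_K2 {F : ℝ → ℝ≥0∞} (hF : Measurable F) : Measurable (K2 mu F) := by
  unfold K2
  refine Measurable.lintegral_prod_right ?_
  have h1 : Measurable fun p : ℝ × ℝ => ENNReal.ofReal (mu * Real.exp (-(mu * p.2))) :=
    (measurable_const.mul ((measurable_snd.const_mul mu).neg.exp)).ennreal_ofReal
  exact h1.mul (hF.comp (measurable_fst.add measurable_snd))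

lemma Kker_eq_K2 (hlam : 0 < lam) (hmu : 0 < mu) {F : ℝ → ℝ≥0∞} (hF : Measurable F) (d : ℝ) :
    Kker lam mu F d
      = ∫⁻ t in Ioi (0:ℝ),
          (if t < d then ENNReal.ofReal (lam * Real.exp (-(lam*t))) * K2 mu F (d - t) else 0) := by
  haveI := isProbabilityMeasure_expMeasure hlam
  haveI := isProbabilityMeasure_expMeasure hmu
  have hmeasz : Measurable (fun z : ℝ × ℝ => if z.1 < d then F (d - z.1 + z.2) else 0) := by
    refine Measurable.ite (measurableSet_lt measurable_fst measurable_const) ?_ measurable_const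
    exact hF.comp ((measurable_const.sub measurable_fst).add measurable_snd)
  unfold Kker
  rw [lintegral_prod _ hmeasz.aemeasurable]
  have houter : Measurable fun t => ∫⁻ v, (if t < d then F (d - t + v) else 0) ∂(expMeasure mu) := by
    refine Measurable.lintegral_prod_right ?_
    refine Measurable.ite (measurableSet_lt measurable_fst measurable_const) ?_ measurable_const
    exact hF.comp ((measurable_const.sub measurable_fst).add measurable_snd)
  rw [lint_expMeasure hlam _ houter]
  refine setLIntegral_congr_fun_ae measurableSet_Ioi (ae_of_all _ fun t _ => ?_)
  by_cases h : t < d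
  · rw [if_pos h]
    congr 1
    have hsimp : ∀ v : ℝ, (if t < d then F (d - t + v) else 0) = F (d - t + v) :=
      fun v => if_pos h
    have hm1 : Measurable fun v : ℝ => F (d - t + v) :=
      hF.comp (measurable_const.add measurable_id)
    rw [lintegral_congr hsimp, lint_expMeasure hmu _ hm1]
    rfl
  · rw [if_neg h]
    have hz : ∫⁻ v, (if t < d then F (d - t + v) else 0) ∂(expMeasure mu) = 0 := by
      simp [if_neg h]
    rw [hz, mul_zero]

/-- Second half of the key step: convolving the surviving density with a fresh service time. -/
lemma stepB (hmu : 0 < mu) (r : ℕ) {F : ℝ → ℝ≥0∞} (hF : Measurable F) :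
    ∫⁻ u in Ioi (0:ℝ), ENNReal.ofReal (gpdf mu r u) * K2 mu F u
      = ∫⁻ y in Ioi (0:ℝ), ENNReal.ofReal (gpdf mu (r+1) y) * F y := by
  have hem : Measurable fun v : ℝ => ENNReal.ofReal (mu * Real.exp (-(mu*v))) := by
    exact (measurable_const.mul ((measurable_id.const_mul mu).neg.exp)).ennreal_ofReal
  have hW : Measurable (Function.uncurry fun t y => ENNReal.ofReal (gpdf mu r t)
      * ENNReal.ofReal (mu * Real.exp (-(mu*(y - t)))) * F y) := by
    refine Measurable.mul (Measurable.fun_mul ?_ ?_) (hF.comp measurable_snd)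
    · exact ((measurable_gpdf mu r).comp measurable_fst).ennreal_ofReal
    · exact (measurable_const.mul
        (((measurable_snd.sub measurable_fst).const_mul mu).neg.exp)).ennreal_ofReal
  calc ∫⁻ u in Ioi (0:ℝ), ENNReal.ofReal (gpdf mu r u) * K2 mu F u
      = ∫⁻ u in Ioi (0:ℝ), ∫⁻ v in Ioi (0:ℝ), ENNReal.ofReal (gpdf mu r u)
          * ENNReal.ofReal (mu * Real.exp (-(mu*((u + v) - u)))) * F (u + v) := by
        refine setLIntegral_congr_fun_ae measurableSet_Ioi (ae_of_all _ fun u _ => ?_)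
        unfold K2
        have hm2 : Measurable fun v : ℝ => ENNReal.ofReal (mu * Real.exp (-(mu*v))) * F (u + v) :=
          hem.mul (hF.comp (measurable_const.add measurable_id))
        rw [← lintegral_const_mul _ hm2]
        refine lintegral_congr fun v => ?_
        rw [add_sub_cancel_left, mul_assoc]
    _ = ∫⁻ y in Ioi (0:ℝ), ∫⁻ t in Ioi (0:ℝ),
          (if t < y then ENNReal.ofReal (gpdf mu r t)
            * ENNReal.ofReal (mu * Real.exp (-(mu*(y - t)))) * F y else 0) :=
        (swap_shift _ hW).symm
    _ = ∫⁻ y in Ioi (0:ℝ), ENNReal.ofReal (gpdf mu (r+1) y) * F y := by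
        refine setLIntegral_congr_fun_ae measurableSet_Ioi (ae_of_all _ fun y hy => ?_)
        have h1 : ∀ t : ℝ, (if t < y then ENNReal.ofReal (gpdf mu r t)
              * ENNReal.ofReal (mu * Real.exp (-(mu*(y - t)))) * F y else 0)
            = (if t < y then ENNReal.ofReal (gpdf mu r t)
              * ENNReal.ofReal (mu * Real.exp (-(mu*(y - t)))) else 0) * F y := by
          intro t
          split_ifs <;> simp
        rw [lintegral_congr h1, lintegral_mul_const _ (by
          refine Measurable.ite (measurableSet_lt measurable_id measurable_const) ?_ measurable_const
          exact ((measurable_gpdf mu r).ennreal_ofReal).mul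
            (measurable_const.mul (((measurable_const.sub measurable_id).const_mul mu).neg.exp)).ennreal_ofReal)]
        congr 1
        have h2 : ∀ t ∈ Ioi (0:ℝ), (if t < y then ENNReal.ofReal (gpdf mu r t)
              * ENNReal.ofReal (mu * Real.exp (-(mu*(y - t)))) else 0)
            = (if t < y then ENNReal.ofReal (gpdf mu r t * (mu * Real.exp (-(mu*(y - t))))) else 0) := by
          intro t ht
          split_ifs with h
          · rw [ENNReal.ofReal_mul (gpdf_nonneg hmu r (le_of_lt ht))]
          · rfl
        rw [setLIntegral_congr_fun_ae measurableSet_Ioi (ae_of_all _ h2), lint_P2 hmu r hy]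

/-- The key lemma: one step of the workload recursion maps the Gamma mixture forward. -/
lemma key_step (hlam : 0 < lam) (hmu : 0 < mu) (m : ℕ) {F : ℝ → ℝ≥0∞} (hF : Measurable F) :
    ∫⁻ x in Ioi (0:ℝ), ENNReal.ofReal (gpdf mu m x) * Kker lam mu F x
      = ∑ r ∈ Finset.range (m+1),
          ENNReal.ofReal ((lam/(lam+mu)) * (mu/(lam+mu))^(m-r))
            * ∫⁻ y in Ioi (0:ℝ), ENNReal.ofReal (gpdf mu (r+1) y) * F y := by
  have hel : Measurable fun t : ℝ => ENNReal.ofReal (lam * Real.exp (-(lam*t))) :=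
    (measurable_const.mul ((measurable_id.const_mul lam).neg.exp)).ennreal_ofReal
  have hK2 : Measurable (K2 mu F) := measurable_K2 hF
  have hG : ∀ k : ℕ, Measurable fun x : ℝ => ENNReal.ofReal (gpdf mu k x) :=
    fun k => (measurable_gpdf mu k).ennreal_ofReal
  have hW1 : Measurable (Function.uncurry fun t x =>
      ENNReal.ofReal (lam * Real.exp (-(lam*t)))
        * (ENNReal.ofReal (gpdf mu m x) * K2 mu F (x - t))) := by
    refine Measurable.mul (hel.comp measurable_fst) ?_
    exact ((hG m).comp measurable_snd).mul (hK2.comp (measurable_snd.sub measurable_fst))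
  have hmeas2 : Measurable (Function.uncurry fun t u =>
      (ENNReal.ofReal (lam * Real.exp (-(lam*t))) * ENNReal.ofReal (gpdf mu m (t+u)))
        * K2 mu F u) := by
    refine Measurable.mul ?_ (hK2.comp measurable_snd)
    exact (hel.comp measurable_fst).mul ((hG m).comp (measurable_fst.add measurable_snd))
  calc ∫⁻ x in Ioi (0:ℝ), ENNReal.ofReal (gpdf mu m x) * Kker lam mu F x
      = ∫⁻ x in Ioi (0:ℝ), ∫⁻ t in Ioi (0:ℝ),
          (if t < x then ENNReal.ofReal (lam * Real.exp (-(lam*t)))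
            * (ENNReal.ofReal (gpdf mu m x) * K2 mu F (x - t)) else 0) := by
        refine setLIntegral_congr_fun_ae measurableSet_Ioi (ae_of_all _ fun x _ => ?_)
        rw [Kker_eq_K2 hlam hmu hF x, ← lintegral_const_mul _ (by
          refine Measurable.ite (measurableSet_lt measurable_id measurable_const) ?_ measurable_const
          exact hel.mul (hK2.comp (measurable_const.sub measurable_id)))]
        refine lintegral_congr fun t => ?_
        split_ifs
        · ring
        · simp
    _ = ∫⁻ t in Ioi (0:ℝ), ∫⁻ u in Ioi (0:ℝ),
          ENNReal.ofReal (lam * Real.exp (-(lam*t)))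
            * (ENNReal.ofReal (gpdf mu m (t+u)) * K2 mu F ((t+u) - t)) :=
        swap_shift _ hW1
    _ = ∫⁻ t in Ioi (0:ℝ), ∫⁻ u in Ioi (0:ℝ),
          (ENNReal.ofReal (lam * Real.exp (-(lam*t))) * ENNReal.ofReal (gpdf mu m (t+u)))
            * K2 mu F u := by
        refine lintegral_congr fun t => lintegral_congr fun u => ?_
        rw [add_sub_cancel_left, mul_assoc]
    _ = ∫⁻ u in Ioi (0:ℝ), ∫⁻ t in Ioi (0:ℝ),
          (ENNReal.ofReal (lam * Real.exp (-(lam*t))) * ENNReal.ofReal (gpdf mu m (t+u)))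
            * K2 mu F u :=
        lintegral_lintegral_swap hmeas2.aemeasurable
    _ = ∫⁻ u in Ioi (0:ℝ),
          (∫⁻ t in Ioi (0:ℝ), ENNReal.ofReal (lam * Real.exp (-(lam*t)) * gpdf mu m (t+u)))
            * K2 mu F u := by
        refine setLIntegral_congr_fun_ae measurableSet_Ioi (ae_of_all _ fun u _ => ?_)
        have hm3 : Measurable fun t : ℝ =>
            ENNReal.ofReal (lam * Real.exp (-(lam*t))) * ENNReal.ofReal (gpdf mu m (t+u)) :=
          hel.mul ((hG m).comp (measurable_id.add_const u))
        rw [lintegral_mul_const _ hm3]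
        congr 1
        refine setLIntegral_congr_fun_ae measurableSet_Ioi (ae_of_all _ fun t _ => ?_)
        rw [← ENNReal.ofReal_mul (show (0:ℝ) ≤ lam * Real.exp (-(lam*t)) by positivity)]
    _ = ∫⁻ u in Ioi (0:ℝ),
          (∑ r ∈ Finset.range (m+1),
            ENNReal.ofReal ((lam/(lam+mu)) * (mu/(lam+mu))^(m-r) * gpdf mu r u))
            * K2 mu F u := by
        refine setLIntegral_congr_fun_ae measurableSet_Ioi (ae_of_all _ fun u hu => ?_)
        rw [lint_P1 hlam hmu m (le_of_lt hu)]
    _ = ∑ r ∈ Finset.range (m+1), ∫⁻ u in Ioi (0:ℝ),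
          ENNReal.ofReal ((lam/(lam+mu)) * (mu/(lam+mu))^(m-r))
            * (ENNReal.ofReal (gpdf mu r u) * K2 mu F u) := by
        rw [← lintegral_finset_sum]
        · refine setLIntegral_congr_fun_ae measurableSet_Ioi (ae_of_all _ fun u _ => ?_)
          rw [Finset.sum_mul]
          refine Finset.sum_congr rfl fun r _ => ?_
          rw [ENNReal.ofReal_mul (by positivity), mul_assoc]
        · intro r _
          exact measurable_const.mul (((hG r).mul hK2).comp measurable_id) |>.comp measurable_id
    _ = ∑ r ∈ Finset.range (m+1),
          ENNReal.ofReal ((lam/(lam+mu)) * (mu/(lam+mu))^(m-r))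
            * ∫⁻ y in Ioi (0:ℝ), ENNReal.ofReal (gpdf mu (r+1) y) * F y := by
        refine Finset.sum_congr rfl fun r _ => ?_
        rw [lintegral_const_mul _ ((hG r).fun_mul hK2), stepB hmu r hF]

end Kernels


/-! ### Independence and Fubini plumbing -/

lemma indep_fubini {Ω α β : Type*} [MeasurableSpace Ω] [MeasurableSpace α] [MeasurableSpace β]
    (P : Measure Ω) [IsProbabilityMeasure P] {X : Ω → α} {Y : Ω → β}
    (hX : Measurable X) (hY : Measurable Y) (hXY : IndepFun X Y P)
    {g : α → β → ℝ≥0∞} (hg : Measurable (Function.uncurry g)) :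
    ∫⁻ ω, g (X ω) (Y ω) ∂P = ∫⁻ ω, ∫⁻ y, g (X ω) y ∂(P.map Y) ∂P := by
  haveI : IsProbabilityMeasure (P.map Y) := Measure.isProbabilityMeasure_map hY.aemeasurable
  haveI : IsProbabilityMeasure (P.map X) := Measure.isProbabilityMeasure_map hX.aemeasurable
  have hmap := (indepFun_iff_map_prod_eq_prod_map_map hX.aemeasurable hY.aemeasurable).mp hXY
  have hgz : Measurable fun z : α × β => g z.1 z.2 := hg
  calc ∫⁻ ω, g (X ω) (Y ω) ∂P
      = ∫⁻ z : α × β, g z.1 z.2 ∂(P.map (fun ω => (X ω, Y ω))) :=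
        (lintegral_map hgz (hX.prodMk hY)).symm
    _ = ∫⁻ z : α × β, g z.1 z.2 ∂((P.map X).prod (P.map Y)) := by rw [hmap]
    _ = ∫⁻ x, ∫⁻ y, g x y ∂(P.map Y) ∂(P.map X) := lintegral_prod _ hgz.aemeasurable
    _ = ∫⁻ ω, ∫⁻ y, g (X ω) y ∂(P.map Y) ∂P :=
        lintegral_map (Measurable.lintegral_prod_right hg) hX

lemma measurableSet_ltAll {Ω : Type*} [MeasurableSpace Ω] (f g : ℕ → Ω → ℝ)
    (hf : ∀ i, Measurable (f i)) (hg : ∀ i, Measurable (g i)) (n : ℕ) :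
    MeasurableSet {ω | ∀ i < n, f i ω < g i ω} := by
  have h : {ω | ∀ i < n, f i ω < g i ω} = ⋂ (i : ℕ) (_ : i < n), {ω | f i ω < g i ω} := by
    ext ω
    simp
  rw [h]
  exact MeasurableSet.biInter (Set.to_countable _) fun i _ => measurableSet_lt (hf i) (hg i)

/-! ### Coordinate extraction -/

/-- Extend a finite tuple by zero. -/
def extFun {k : ℕ} (w : Fin k → ℝ) (j : ℕ) : ℝ := if h : j < k then w ⟨j, h⟩ else 0

lemma measurable_extFun {k : ℕ} (j : ℕ) : Measurable fun w : Fin k → ℝ => extFun w j := by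
  unfold extFun
  by_cases h : j < k
  · simp only [dif_pos h]
    exact measurable_pi_apply _
  · simp only [dif_neg h]
    exact measurable_const

/-- The workload functional on coordinates. -/
def Dt (n : ℕ) (v : (Fin n → ℝ) × (Fin (n+1) → ℝ)) : ℝ :=
  ∑ j ∈ Finset.range (n+1), extFun v.2 j - ∑ j ∈ Finset.range n, extFun v.1 j

lemma measurable_Dt (n : ℕ) : Measurable (Dt n) := by
  unfold Dt
  refine Measurable.sub ?_ ?_
  · exact Finset.measurable_sum _ fun j _ => (measurable_extFun j).comp measurable_snd
  · exact Finset.measurable_sum _ fun j _ => (measurable_extFun j).comp measurable_fst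

/-- The survival event on coordinates. -/
def At (n : ℕ) (v : (Fin n → ℝ) × (Fin (n+1) → ℝ)) : Prop :=
  ∀ i < n, ∑ j ∈ Finset.range (i+1), extFun v.1 j < ∑ j ∈ Finset.range (i+1), extFun v.2 j

lemma measurableSet_At (n : ℕ) : MeasurableSet {v | At n v} :=
  measurableSet_ltAll _ _
    (fun i => Finset.measurable_sum _ fun j _ => (measurable_extFun j).comp measurable_fst)
    (fun i => Finset.measurable_sum _ fun j _ => (measurable_extFun j).comp measurable_snd) n

/-! ### Double sum exchange -/

lemma sum_range_swap {β : Type*} [AddCommMonoid β] (f : ℕ → ℕ → β) (n : ℕ) :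
    ∑ m ∈ Finset.range (n+1), ∑ r ∈ Finset.range (m+1), f m r
      = ∑ r ∈ Finset.range (n+1), ∑ m ∈ Finset.Icc r n, f m r := by
  induction n with
  | zero => simp
  | succ n IH =>
    rw [Finset.sum_range_succ _ (n+1), IH,
      Finset.sum_range_succ (fun r => ∑ m ∈ Finset.Icc r (n+1), f m r) (n+1),
      Finset.Icc_self, Finset.sum_singleton,
      Finset.sum_range_succ (fun r => f (n+1) r) (n+1)]
    have h : ∀ r ∈ Finset.range (n+1),
        ∑ m ∈ Finset.Icc r (n+1), f m r = ∑ m ∈ Finset.Icc r n, f m r + f (n+1) r := by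
      intro r hr
      have hr' := Finset.mem_range.mp hr
      exact Finset.sum_Icc_succ_top (by omega) _
    rw [Finset.sum_congr rfl h, Finset.sum_add_distrib]
    abel

lemma pow_merge (a b C : ℝ) {r m n : ℕ} (hrm : r ≤ m) (hmn : m ≤ n) :
    a^n * b^(n-m) * C * (a * b^(m-r)) = a^(n+1) * b^(n-r) * C := by
  have h1 : b^(n-m) * b^(m-r) = b^(n-r) := by
    rw [← pow_add]
    congr 1
    omega
  calc a^n * b^(n-m) * C * (a * b^(m-r))
      = (a^n * a) * (b^(n-m) * b^(m-r)) * C := by ring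
    _ = a^(n+1) * b^(n-r) * C := by rw [← pow_succ, h1]

/-! ### The main induction: law of the residual workload on the survival event -/

lemma main_ind {Ω : Type*} [MeasurableSpace Ω] (P : Measure Ω) [IsProbabilityMeasure P]
    {lam mu : ℝ} (hlam : 0 < lam) (hmu : 0 < mu)
    (τ σ : ℕ → Ω → ℝ)
    (hτm : ∀ j, Measurable (τ j)) (hσm : ∀ j, Measurable (σ j))
    (hindep : iIndepFun (Sum.elim τ σ) P)
    (hτ : ∀ j, P.map (τ j) = expMeasure lam)
    (hσ : ∀ j, P.map (σ j) = expMeasure mu) :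
    ∀ (n : ℕ) (F : ℝ → ℝ≥0∞), Measurable F →
      ∫⁻ ω in {ω | ∀ i < n,
          ∑ j ∈ Finset.range (i+1), τ j ω < ∑ j ∈ Finset.range (i+1), σ j ω},
        F ((∑ j ∈ Finset.range (n+1), σ j ω) - ∑ j ∈ Finset.range n, τ j ω) ∂P
      = ∑ m ∈ Finset.range (n+1),
          ENNReal.ofReal ((lam/(lam+mu))^n * (mu/(lam+mu))^(n-m) * (MM n m : ℝ))
            * ∫⁻ x in Ioi (0:ℝ), ENNReal.ofReal (gpdf mu m x) * F x := by
  intro n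
  induction n with
  | zero =>
    intro F hF
    have hset : {ω : Ω | ∀ i < 0,
        ∑ j ∈ Finset.range (i+1), τ j ω < ∑ j ∈ Finset.range (i+1), σ j ω} = Set.univ := by
      ext ω
      simp
    rw [hset, Measure.restrict_univ]
    have hfun : ∀ ω : Ω, ((∑ j ∈ Finset.range 1, σ j ω) - ∑ j ∈ Finset.range 0, τ j ω)
        = σ 0 ω := by
      intro ω
      simp
    rw [lintegral_congr fun ω => by rw [hfun ω],
      show ∫⁻ ω, F (σ 0 ω) ∂P = ∫⁻ x, F x ∂(P.map (σ 0)) from (lintegral_map hF (hσm 0)).symm,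
      hσ 0, lint_expMeasure hmu F hF, Finset.sum_range_one]
    rw [show ((lam/(lam+mu))^0 * (mu/(lam+mu))^(0-0) * (MM 0 0 : ℝ)) = 1 from by norm_num [MM]]
    rw [ENNReal.ofReal_one, one_mul]
    refine setLIntegral_congr_fun_ae measurableSet_Ioi (ae_of_all _ fun x _ => ?_)
    have hg0 : mu * Real.exp (-(mu*x)) = gpdf mu 0 x := by
      unfold gpdf
      norm_num
    rw [hg0]
  | succ n IH =>
    intro F hF
    haveI := isProbabilityMeasure_expMeasure hlam
    haveI := isProbabilityMeasure_expMeasure hmu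
    classical
    set Dn : Ω → ℝ := fun ω =>
      (∑ j ∈ Finset.range (n+1), σ j ω) - ∑ j ∈ Finset.range n, τ j ω with hDn
    set A : Set Ω := {ω | ∀ i < n,
      ∑ j ∈ Finset.range (i+1), τ j ω < ∑ j ∈ Finset.range (i+1), σ j ω} with hA
    have hAmeas : MeasurableSet A :=
      measurableSet_ltAll _ _ (fun i => Finset.measurable_sum _ fun j _ => hτm j)
        (fun i => Finset.measurable_sum _ fun j _ => hσm j) n
    have hDnmeas : Measurable Dn :=
      (Finset.measurable_sum _ fun j _ => hσm j).sub (Finset.measurable_sum _ fun j _ => hτm j)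
    have hBmeas : MeasurableSet {ω | τ n ω < Dn ω} := measurableSet_lt (hτm n) hDnmeas
    have hAsucc : {ω : Ω | ∀ i < n+1,
        ∑ j ∈ Finset.range (i+1), τ j ω < ∑ j ∈ Finset.range (i+1), σ j ω}
        = A ∩ {ω | τ n ω < Dn ω} := by
      ext ω
      simp only [hA, hDn, Set.mem_setOf_eq, Set.mem_inter_iff]
      constructor
      · intro h
        refine ⟨fun i hi => h i (by omega), ?_⟩
        have h2 := h n (by omega)
        rw [Finset.sum_range_succ] at h2
        linarith
      · rintro ⟨h1, h2⟩ i hi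
        rcases Nat.lt_succ_iff_lt_or_eq.mp hi with h | rfl
        · exact h1 i h
        · rw [Finset.sum_range_succ]
          linarith
    have hDsucc : ∀ ω : Ω, (∑ j ∈ Finset.range (n+1+1), σ j ω) - ∑ j ∈ Finset.range (n+1), τ j ω
        = Dn ω - τ n ω + σ (n+1) ω := by
      intro ω
      rw [Finset.sum_range_succ (fun j => σ j ω) (n+1), Finset.sum_range_succ (fun j => τ j ω) n]
      simp only [hDn]
      ring
    set X : Ω → (Fin n → ℝ) × (Fin (n+1) → ℝ) :=
      fun ω => (fun j => τ (j:ℕ) ω, fun j => σ (j:ℕ) ω) with hX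
    set Y : Ω → ℝ × ℝ := fun ω => (τ n ω, σ (n+1) ω) with hY
    have hXm : Measurable X :=
      (measurable_pi_lambda _ fun j => hτm _).prodMk (measurable_pi_lambda _ fun j => hσm _)
    have hYm : Measurable Y := (hτm n).prodMk (hσm (n+1))
    have hsumτ : ∀ (ω : Ω) (k : ℕ), k ≤ n →
        ∑ j ∈ Finset.range k, extFun (X ω).1 j = ∑ j ∈ Finset.range k, τ j ω := by
      intro ω k hk
      refine Finset.sum_congr rfl fun j hj => ?_
      have hjn : j < n := by
        have := Finset.mem_range.mp hj
        omega
      simp [hX, extFun, dif_pos hjn]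
    have hsumσ : ∀ (ω : Ω) (k : ℕ), k ≤ n+1 →
        ∑ j ∈ Finset.range k, extFun (X ω).2 j = ∑ j ∈ Finset.range k, σ j ω := by
      intro ω k hk
      refine Finset.sum_congr rfl fun j hj => ?_
      have hjn : j < n+1 := by
        have := Finset.mem_range.mp hj
        omega
      simp [hX, extFun, dif_pos hjn]
      intro h; exact absurd hjn (by omega)
    have hDt : ∀ ω : Ω, Dt n (X ω) = Dn ω := by
      intro ω
      unfold Dt
      rw [hsumσ ω (n+1) le_rfl, hsumτ ω n le_rfl]
    have hAt : ∀ ω : Ω, At n (X ω) ↔ ω ∈ A := by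
      intro ω
      unfold At
      simp only [hA, Set.mem_setOf_eq]
      constructor
      · intro h i hi
        have h2 := h i hi
        rwa [hsumτ ω (i+1) (by omega), hsumσ ω (i+1) (by omega)] at h2
      · intro h i hi
        rw [hsumτ ω (i+1) (by omega), hsumσ ω (i+1) (by omega)]
        exact h i hi
    set S : Finset (ℕ ⊕ ℕ) :=
      ((Finset.range n).image Sum.inl) ∪ ((Finset.range (n+1)).image Sum.inr) with hS
    set T : Finset (ℕ ⊕ ℕ) := {Sum.inl n, Sum.inr (n+1)} with hT
    have hST : Disjoint S T := by
      rw [Finset.disjoint_left]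
      intro a haS haT
      simp only [hS, hT, Finset.mem_union, Finset.mem_image, Finset.mem_range,
        Finset.mem_insert, Finset.mem_singleton] at haS haT
      rcases haT with rfl | rfl <;> rcases haS with ⟨j, hj, hje⟩ | ⟨j, hj, hje⟩ <;>
        simp_all
    have hElimMeas : ∀ i : ℕ ⊕ ℕ, Measurable (Sum.elim τ σ i) := by
      intro i
      cases i with
      | inl j => exact hτm j
      | inr j => exact hσm j
    have hfin := hindep.indepFun_finset S T hST hElimMeas
    have hmem1 : ∀ j : Fin n, (Sum.inl (j:ℕ) : ℕ ⊕ ℕ) ∈ S := by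
      intro j
      rw [hS]
      exact Finset.mem_union_left _ (Finset.mem_image_of_mem _ (Finset.mem_range.mpr j.2))
    have hmem2 : ∀ j : Fin (n+1), (Sum.inr (j:ℕ) : ℕ ⊕ ℕ) ∈ S := by
      intro j
      rw [hS]
      exact Finset.mem_union_right _ (Finset.mem_image_of_mem _ (Finset.mem_range.mpr j.2))
    have hmemT1 : (Sum.inl n : ℕ ⊕ ℕ) ∈ T := by
      rw [hT]
      exact Finset.mem_insert_self _ _
    have hmemT2 : (Sum.inr (n+1) : ℕ ⊕ ℕ) ∈ T := by
      rw [hT]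
      exact Finset.mem_insert_of_mem (Finset.mem_singleton_self _)
    have hXY : IndepFun X Y P := by
      have hφ₁ : Measurable fun v : {x // x ∈ S} → ℝ =>
          ((fun j : Fin n => v ⟨Sum.inl (j:ℕ), hmem1 j⟩,
            fun j : Fin (n+1) => v ⟨Sum.inr (j:ℕ), hmem2 j⟩) :
            (Fin n → ℝ) × (Fin (n+1) → ℝ)) :=
        (measurable_pi_lambda _ fun j => measurable_pi_apply _).prodMk
          (measurable_pi_lambda _ fun j => measurable_pi_apply _)
      have hφ₂ : Measurable fun v : {x // x ∈ T} → ℝ =>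
          ((v ⟨Sum.inl n, hmemT1⟩, v ⟨Sum.inr (n+1), hmemT2⟩) : ℝ × ℝ) :=
        (measurable_pi_apply _).prodMk (measurable_pi_apply _)
      exact hfin.comp hφ₁ hφ₂
    have hmapY : P.map Y = (expMeasure lam).prod (expMeasure mu) := by
      have hi : IndepFun (τ n) (σ (n+1)) P :=
        hindep.indepFun (show (Sum.inl n : ℕ ⊕ ℕ) ≠ Sum.inr (n+1) by simp)
      rw [hY, ← hτ n, ← hσ (n+1)]
      exact (indepFun_iff_map_prod_eq_prod_map_map (hτm n).aemeasurable
        (hσm (n+1)).aemeasurable).mp hi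
    set g : ((Fin n → ℝ) × (Fin (n+1) → ℝ)) → ℝ × ℝ → ℝ≥0∞ := fun v y =>
      if At n v ∧ y.1 < Dt n v then F (Dt n v - y.1 + y.2) else 0 with hg
    have hgm : Measurable (Function.uncurry g) := by
      have hcond : MeasurableSet {z : ((Fin n → ℝ) × (Fin (n+1) → ℝ)) × ℝ × ℝ |
          At n z.1 ∧ z.2.1 < Dt n z.1} := by
        refine MeasurableSet.inter ?_ ?_
        · exact (measurableSet_At n).preimage measurable_fst
        · exact measurableSet_lt (measurable_fst.comp measurable_snd)
            ((measurable_Dt n).comp measurable_fst)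
      refine Measurable.ite hcond ?_ measurable_const
      exact hF.comp ((((measurable_Dt n).comp measurable_fst).sub
        (measurable_fst.comp measurable_snd)).add (measurable_snd.comp measurable_snd))
    calc ∫⁻ ω in {ω | ∀ i < n+1,
            ∑ j ∈ Finset.range (i+1), τ j ω < ∑ j ∈ Finset.range (i+1), σ j ω},
          F ((∑ j ∈ Finset.range (n+1+1), σ j ω) - ∑ j ∈ Finset.range (n+1), τ j ω) ∂P
        = ∫⁻ ω, g (X ω) (Y ω) ∂P := by
          rw [hAsucc, ← lintegral_indicator (hAmeas.inter hBmeas)]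
          refine lintegral_congr fun ω => ?_
          rw [Set.indicator_apply]
          by_cases hmem : ω ∈ A ∩ {ω | τ n ω < Dn ω}
          · rw [if_pos hmem]
            have hc : At n (X ω) ∧ (Y ω).1 < Dt n (X ω) :=
              ⟨(hAt ω).mpr hmem.1, by rw [hDt ω]; exact hmem.2⟩
            simp only [hg]
            rw [if_pos hc, hDt ω, hDsucc ω]
          · rw [if_neg hmem]
            have hc : ¬(At n (X ω) ∧ (Y ω).1 < Dt n (X ω)) := by
              intro hc
              exact hmem ⟨(hAt ω).mp hc.1, by
                have := hc.2
                rwa [hDt ω] at this⟩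
            simp only [hg]
            rw [if_neg hc]
      _ = ∫⁻ ω, ∫⁻ y, g (X ω) y ∂(P.map Y) ∂P := indep_fubini P hXm hYm hXY hgm
      _ = ∫⁻ ω, A.indicator (fun ω => Kker lam mu F (Dn ω)) ω ∂P := by
          rw [hmapY]
          refine lintegral_congr fun ω => ?_
          rw [Set.indicator_apply]
          by_cases hmem : ω ∈ A
          · rw [if_pos hmem]
            unfold Kker
            refine lintegral_congr fun y => ?_
            simp only [hg]
            have hAtt := (hAt ω).mpr hmem
            by_cases hy : y.1 < Dn ω
            · rw [if_pos ⟨hAtt, by rw [hDt ω]; exact hy⟩, if_pos hy, hDt ω]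
            · rw [if_neg (fun hc => hy (by
                have := hc.2
                rwa [hDt ω] at this)), if_neg hy]
          · rw [if_neg hmem]
            have hzero : ∀ y : ℝ × ℝ, g (X ω) y = 0 := by
              intro y
              simp only [hg]
              exact if_neg (fun hc => hmem ((hAt ω).mp hc.1))
            rw [lintegral_congr hzero]
            simp
      _ = ∫⁻ ω in A, Kker lam mu F (Dn ω) ∂P := lintegral_indicator hAmeas _
      _ = ∑ m ∈ Finset.range (n+1),
            ENNReal.ofReal ((lam/(lam+mu))^n * (mu/(lam+mu))^(n-m) * (MM n m : ℝ))
              * ∫⁻ x in Ioi (0:ℝ), ENNReal.ofReal (gpdf mu m x) * Kker lam mu F x :=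
          IH (Kker lam mu F) (measurable_Kker hlam hmu hF)
      _ = ∑ m ∈ Finset.range (n+1), ∑ r ∈ Finset.range (m+1),
            ENNReal.ofReal ((lam/(lam+mu))^(n+1) * (mu/(lam+mu))^(n-r) * (MM n m : ℝ))
              * ∫⁻ y in Ioi (0:ℝ), ENNReal.ofReal (gpdf mu (r+1) y) * F y := by
          refine Finset.sum_congr rfl fun m hm => ?_
          rw [key_step hlam hmu m hF, Finset.mul_sum]
          refine Finset.sum_congr rfl fun r hr => ?_
          rw [← mul_assoc]
          congr 1
          rw [← ENNReal.ofReal_mul (by positivity)]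
          congr 1
          have hrm : r ≤ m := Nat.lt_succ_iff.mp (Finset.mem_range.mp hr)
          have hmn : m ≤ n := Nat.lt_succ_iff.mp (Finset.mem_range.mp hm)
          exact pow_merge _ _ _ hrm hmn
      _ = ∑ r ∈ Finset.range (n+1),
            (∑ m ∈ Finset.Icc r n,
              ENNReal.ofReal ((lam/(lam+mu))^(n+1) * (mu/(lam+mu))^(n-r) * (MM n m : ℝ)))
              * ∫⁻ y in Ioi (0:ℝ), ENNReal.ofReal (gpdf mu (r+1) y) * F y := by
          rw [sum_range_swap (fun m r =>
            ENNReal.ofReal ((lam/(lam+mu))^(n+1) * (mu/(lam+mu))^(n-r) * (MM n m : ℝ))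
              * ∫⁻ y in Ioi (0:ℝ), ENNReal.ofReal (gpdf mu (r+1) y) * F y) n]
          refine Finset.sum_congr rfl fun r hr => ?_
          rw [← Finset.sum_mul]
      _ = ∑ r ∈ Finset.range (n+1),
            ENNReal.ofReal ((lam/(lam+mu))^(n+1) * (mu/(lam+mu))^(n-r) * (MM (n+1) (r+1) : ℝ))
              * ∫⁻ y in Ioi (0:ℝ), ENNReal.ofReal (gpdf mu (r+1) y) * F y := by
          refine Finset.sum_congr rfl fun r hr => ?_
          congr 1
          rw [← ENNReal.ofReal_sum_of_nonneg (fun m hm => by positivity)]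
          congr 1
          rw [← Finset.mul_sum]
          congr 1
          rw [MM_succ, if_pos (by omega : 1 ≤ r+1)]
          rw [show r+1-1 = r from rfl]
          exact (Nat.cast_sum _ _).symm
      _ = ∑ m ∈ Finset.range (n+1+1),
            ENNReal.ofReal ((lam/(lam+mu))^(n+1) * (mu/(lam+mu))^(n+1-m) * (MM (n+1) m : ℝ))
              * ∫⁻ x in Ioi (0:ℝ), ENNReal.ofReal (gpdf mu m x) * F x := by
          conv_rhs => rw [Finset.sum_range_succ']
          have h0 : ENNReal.ofReal ((lam/(lam+mu))^(n+1) * (mu/(lam+mu))^(n+1-0) * (MM (n+1) 0 : ℝ))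
              * ∫⁻ x in Ioi (0:ℝ), ENNReal.ofReal (gpdf mu 0 x) * F x = 0 := by
            rw [MM_succ]
            norm_num
          rw [h0, add_zero]
          refine Finset.sum_congr rfl fun r hr => ?_
          rw [Nat.succ_sub_succ_eq_sub]

lemma pow_merge2 (a b C : ℝ) {m n : ℕ} (hmn : m ≤ n) :
    a^n * b^(n-m) * C * b^(m+1) = a^n * b^(n+1) * C := by
  have h1 : b^(n-m) * b^(m+1) = b^(n+1) := by
    rw [← pow_add]
    congr 1
    omega
  calc a^n * b^(n-m) * C * b^(m+1) = a^n * (b^(n-m) * b^(m+1)) * C := by ring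
    _ = a^n * b^(n+1) * C := by rw [h1]

/-- Final form: the probability of the busy-period event. -/
lemma final_prob {Ω : Type*} [MeasurableSpace Ω] (P : Measure Ω) [IsProbabilityMeasure P]
    (lam mu : ℝ) (hlam : 0 < lam) (hmu : 0 < mu)
    (τ σ : ℕ → Ω → ℝ)
    (hτm : ∀ j, Measurable (τ j)) (hσm : ∀ j, Measurable (σ j))
    (hindep : iIndepFun (Sum.elim τ σ) P)
    (hτ : ∀ j, P.map (τ j) = expMeasure lam)
    (hσ : ∀ j, P.map (σ j) = expMeasure mu)
    (n : ℕ) :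
    P {ω | (∀ i < n, ∑ j ∈ Finset.range (i + 1), τ j ω < ∑ j ∈ Finset.range (i + 1), σ j ω) ∧
        ∑ j ∈ Finset.range (n + 1), σ j ω ≤ ∑ j ∈ Finset.range (n + 1), τ j ω}
      = ENNReal.ofReal ((catalan n : ℝ) * lam ^ n * mu ^ (n + 1) / (lam + mu) ^ (2 * n + 1)) := by
  haveI := isProbabilityMeasure_expMeasure hlam
  haveI := isProbabilityMeasure_expMeasure hmu
  classical
  set Dn : Ω → ℝ := fun ω =>
    (∑ j ∈ Finset.range (n+1), σ j ω) - ∑ j ∈ Finset.range n, τ j ω with hDn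
  set A : Set Ω := {ω | ∀ i < n,
    ∑ j ∈ Finset.range (i+1), τ j ω < ∑ j ∈ Finset.range (i+1), σ j ω} with hA
  have hAmeas : MeasurableSet A :=
    measurableSet_ltAll _ _ (fun i => Finset.measurable_sum _ fun j _ => hτm j)
      (fun i => Finset.measurable_sum _ fun j _ => hσm j) n
  have hDnmeas : Measurable Dn :=
    (Finset.measurable_sum _ fun j _ => hσm j).sub (Finset.measurable_sum _ fun j _ => hτm j)
  have hBmeas : MeasurableSet {ω | Dn ω ≤ τ n ω} := measurableSet_le hDnmeas (hτm n)
  have hsplit : {ω : Ω |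
      (∀ i < n, ∑ j ∈ Finset.range (i + 1), τ j ω < ∑ j ∈ Finset.range (i + 1), σ j ω) ∧
        ∑ j ∈ Finset.range (n + 1), σ j ω ≤ ∑ j ∈ Finset.range (n + 1), τ j ω}
      = A ∩ {ω | Dn ω ≤ τ n ω} := by
    ext ω
    simp only [hA, hDn, Set.mem_setOf_eq, Set.mem_inter_iff]
    constructor
    · rintro ⟨h1, h2⟩
      refine ⟨h1, ?_⟩
      rw [Finset.sum_range_succ (fun j => τ j ω) n] at h2
      linarith
    · rintro ⟨h1, h2⟩
      refine ⟨h1, ?_⟩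
      rw [Finset.sum_range_succ (fun j => τ j ω) n]
      linarith
  set X : Ω → (Fin n → ℝ) × (Fin (n+1) → ℝ) :=
    fun ω => (fun j => τ (j:ℕ) ω, fun j => σ (j:ℕ) ω) with hX
  have hXm : Measurable X :=
    (measurable_pi_lambda _ fun j => hτm _).prodMk (measurable_pi_lambda _ fun j => hσm _)
  have hsumτ : ∀ (ω : Ω) (k : ℕ), k ≤ n →
      ∑ j ∈ Finset.range k, extFun (X ω).1 j = ∑ j ∈ Finset.range k, τ j ω := by
    intro ω k hk
    refine Finset.sum_congr rfl fun j hj => ?_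
    have hjn : j < n := by
      have := Finset.mem_range.mp hj
      omega
    simp [hX, extFun, dif_pos hjn]
  have hsumσ : ∀ (ω : Ω) (k : ℕ), k ≤ n+1 →
      ∑ j ∈ Finset.range k, extFun (X ω).2 j = ∑ j ∈ Finset.range k, σ j ω := by
    intro ω k hk
    refine Finset.sum_congr rfl fun j hj => ?_
    have hjn : j < n+1 := by
      have := Finset.mem_range.mp hj
      omega
    simp [hX, extFun, dif_pos hjn]
    intro h; exact absurd hjn (by omega)
  have hDt : ∀ ω : Ω, Dt n (X ω) = Dn ω := by
    intro ω
    unfold Dt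
    rw [hsumσ ω (n+1) le_rfl, hsumτ ω n le_rfl]
  have hAt : ∀ ω : Ω, At n (X ω) ↔ ω ∈ A := by
    intro ω
    unfold At
    simp only [hA, Set.mem_setOf_eq]
    constructor
    · intro h i hi
      have h2 := h i hi
      rwa [hsumτ ω (i+1) (by omega), hsumσ ω (i+1) (by omega)] at h2
    · intro h i hi
      rw [hsumτ ω (i+1) (by omega), hsumσ ω (i+1) (by omega)]
      exact h i hi
  set S : Finset (ℕ ⊕ ℕ) :=
    ((Finset.range n).image Sum.inl) ∪ ((Finset.range (n+1)).image Sum.inr) with hS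
  set T : Finset (ℕ ⊕ ℕ) := {Sum.inl n} with hT
  have hST : Disjoint S T := by
    rw [Finset.disjoint_left]
    intro a haS haT
    simp only [hS, hT, Finset.mem_union, Finset.mem_image, Finset.mem_range,
      Finset.mem_singleton] at haS haT
    subst haT
    rcases haS with ⟨j, hj, hje⟩ | ⟨j, hj, hje⟩ <;> simp_all
  have hElimMeas : ∀ i : ℕ ⊕ ℕ, Measurable (Sum.elim τ σ i) := by
    intro i
    cases i with
    | inl j => exact hτm j
    | inr j => exact hσm j
  have hfin := hindep.indepFun_finset S T hST hElimMeas
  have hmem1 : ∀ j : Fin n, (Sum.inl (j:ℕ) : ℕ ⊕ ℕ) ∈ S := by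
    intro j
    rw [hS]
    exact Finset.mem_union_left _ (Finset.mem_image_of_mem _ (Finset.mem_range.mpr j.2))
  have hmem2 : ∀ j : Fin (n+1), (Sum.inr (j:ℕ) : ℕ ⊕ ℕ) ∈ S := by
    intro j
    rw [hS]
    exact Finset.mem_union_right _ (Finset.mem_image_of_mem _ (Finset.mem_range.mpr j.2))
  have hmemT1 : (Sum.inl n : ℕ ⊕ ℕ) ∈ T := by
    rw [hT]
    exact Finset.mem_singleton_self _
  have hXY : IndepFun X (τ n) P := by
    have hφ₁ : Measurable fun v : {x // x ∈ S} → ℝ =>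
        ((fun j : Fin n => v ⟨Sum.inl (j:ℕ), hmem1 j⟩,
          fun j : Fin (n+1) => v ⟨Sum.inr (j:ℕ), hmem2 j⟩) :
          (Fin n → ℝ) × (Fin (n+1) → ℝ)) :=
      (measurable_pi_lambda _ fun j => measurable_pi_apply _).prodMk
        (measurable_pi_lambda _ fun j => measurable_pi_apply _)
    have hφ₂ : Measurable fun v : {x // x ∈ T} → ℝ => v ⟨Sum.inl n, hmemT1⟩ :=
      measurable_pi_apply _
    exact hfin.comp hφ₁ hφ₂
  set Hfun : ℝ → ℝ≥0∞ := fun d => ∫⁻ t, (if d ≤ t then 1 else 0) ∂(expMeasure lam) with hHfun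
  have hHm : Measurable Hfun := by
    refine Measurable.lintegral_prod_right ?_
    exact Measurable.ite (measurableSet_le measurable_fst measurable_snd)
      measurable_const measurable_const
  set g : ((Fin n → ℝ) × (Fin (n+1) → ℝ)) → ℝ → ℝ≥0∞ := fun v t =>
    if At n v ∧ Dt n v ≤ t then 1 else 0 with hg
  have hgm : Measurable (Function.uncurry g) := by
    have hcond : MeasurableSet {z : ((Fin n → ℝ) × (Fin (n+1) → ℝ)) × ℝ |
        At n z.1 ∧ Dt n z.1 ≤ z.2} := by
      refine MeasurableSet.inter ?_ ?_
      · exact (measurableSet_At n).preimage measurable_fst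
      · exact measurableSet_le ((measurable_Dt n).comp measurable_fst) measurable_snd
    exact Measurable.ite hcond measurable_const measurable_const
  calc P {ω : Ω |
        (∀ i < n, ∑ j ∈ Finset.range (i + 1), τ j ω < ∑ j ∈ Finset.range (i + 1), σ j ω) ∧
          ∑ j ∈ Finset.range (n + 1), σ j ω ≤ ∑ j ∈ Finset.range (n + 1), τ j ω}
      = ∫⁻ ω, (A ∩ {ω | Dn ω ≤ τ n ω}).indicator 1 ω ∂P := by
        rw [hsplit, lintegral_indicator_one (hAmeas.inter hBmeas)]
    _ = ∫⁻ ω, g (X ω) (τ n ω) ∂P := by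
        refine lintegral_congr fun ω => ?_
        rw [Set.indicator_apply]
        by_cases hmem : ω ∈ A ∩ {ω | Dn ω ≤ τ n ω}
        · rw [if_pos hmem]
          simp only [hg]
          rw [if_pos ⟨(hAt ω).mpr hmem.1, by rw [hDt ω]; exact hmem.2⟩]
          rfl
        · rw [if_neg hmem]
          simp only [hg]
          rw [if_neg (fun hc => hmem ⟨(hAt ω).mp hc.1, by
            have := hc.2
            rwa [hDt ω] at this⟩)]
    _ = ∫⁻ ω, ∫⁻ t, g (X ω) t ∂(P.map (τ n)) ∂P := indep_fubini P hXm (hτm n) hXY hgm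
    _ = ∫⁻ ω, A.indicator (fun ω => Hfun (Dn ω)) ω ∂P := by
        rw [hτ n]
        refine lintegral_congr fun ω => ?_
        rw [Set.indicator_apply]
        by_cases hmem : ω ∈ A
        · rw [if_pos hmem]
          simp only [hHfun, hg]
          refine lintegral_congr fun t => ?_
          have hAtt := (hAt ω).mpr hmem
          by_cases ht : Dn ω ≤ t
          · rw [if_pos ⟨hAtt, by rw [hDt ω]; exact ht⟩, if_pos ht]
          · rw [if_neg (fun hc => ht (by
              have := hc.2
              rwa [hDt ω] at this)), if_neg ht]
        · rw [if_neg hmem]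
          have hzero : ∀ t : ℝ, g (X ω) t = 0 := by
            intro t
            simp only [hg]
            exact if_neg (fun hc => hmem ((hAt ω).mp hc.1))
          rw [lintegral_congr hzero]
          simp
    _ = ∫⁻ ω in A, Hfun (Dn ω) ∂P := lintegral_indicator hAmeas _
    _ = ∑ m ∈ Finset.range (n+1),
          ENNReal.ofReal ((lam/(lam+mu))^n * (mu/(lam+mu))^(n-m) * (MM n m : ℝ))
            * ∫⁻ x in Ioi (0:ℝ), ENNReal.ofReal (gpdf mu m x) * Hfun x :=
        main_ind P hlam hmu τ σ hτm hσm hindep hτ hσ n Hfun hHm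
    _ = ∑ m ∈ Finset.range (n+1),
          ENNReal.ofReal ((lam/(lam+mu))^n * (mu/(lam+mu))^(n-m) * (MM n m : ℝ))
            * ENNReal.ofReal ((mu/(lam+mu))^(m+1)) := by
        refine Finset.sum_congr rfl fun m hm => ?_
        congr 1
        have hHx : ∀ x ∈ Ioi (0:ℝ), Hfun x = ENNReal.ofReal (Real.exp (-(lam*x))) := by
          intro x hx
          simp only [hHfun]
          rw [lint_expMeasure hlam (fun t => if x ≤ t then 1 else 0)
            (Measurable.ite (measurableSet_le measurable_const measurable_id)
              measurable_const measurable_const)]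
          exact lint_exp_tail hlam hx
        rw [setLIntegral_congr_fun_ae measurableSet_Ioi (ae_of_all _ fun x hx => by rw [hHx x hx]),
          lint_gq hlam hmu m]
    _ = ENNReal.ofReal ((catalan n : ℝ) * lam ^ n * mu ^ (n + 1) / (lam + mu) ^ (2 * n + 1)) := by
        have hterm : ∀ m ∈ Finset.range (n+1),
            ENNReal.ofReal ((lam/(lam+mu))^n * (mu/(lam+mu))^(n-m) * (MM n m : ℝ))
              * ENNReal.ofReal ((mu/(lam+mu))^(m+1))
            = ENNReal.ofReal ((lam/(lam+mu))^n * (mu/(lam+mu))^(n+1) * (MM n m : ℝ)) := by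
          intro m hm
          rw [← ENNReal.ofReal_mul (by positivity)]
          congr 1
          exact pow_merge2 _ _ _ (Nat.lt_succ_iff.mp (Finset.mem_range.mp hm))
        rw [Finset.sum_congr rfl hterm,
          ← ENNReal.ofReal_sum_of_nonneg (fun m hm => by positivity), ← Finset.mul_sum]
        have hcat : ∑ m ∈ Finset.range (n+1), (MM n m : ℝ) = (catalan n : ℝ) := by
          rw [← Nat.cast_sum, MM_sum]
        rw [hcat]
        congr 1
        have hs : (0:ℝ) < lam + mu := by linarith
        have hsne : (lam + mu) ≠ 0 := ne_of_gt hs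
        rw [div_pow, div_pow]
        have hpow : (lam+mu)^(2*n+1) = (lam+mu)^n * (lam+mu)^(n+1) := by
          rw [← pow_add]
          congr 1
          omega
        rw [hpow]
        field_simp
end BusyAux

/-- The event that the busy period initiated by customer 0 contains exactly `n+1` customers:
the `i`-th partial sum of inter-arrival times is smaller than the `i`-th partial sum of service
times for `i = 0, …, n-1`, and the `n`-th partial sum of inter-arrival times is at least the
`n`-th partial sum of service times. -/
def busyDelta {Ω : Type*} (τ σ : ℕ → Ω → ℝ) (n : ℕ) : Set Ω :=
  {ω | (∀ i < n, ∑ j ∈ Finset.range (i + 1), τ j ω < ∑ j ∈ Finset.range (i + 1), σ j ω) ∧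
       ∑ j ∈ Finset.range (n + 1), σ j ω ≤ ∑ j ∈ Finset.range (n + 1), τ j ω}

/-- `P(Δ_n) = C_n · λ^n · μ^(n+1) / (λ+μ)^(2n+1)`. -/
theorem prob_busyDelta
    {Ω : Type*} [MeasurableSpace Ω] (P : Measure Ω) [IsProbabilityMeasure P]
    (lam mu : ℝ) (hlam : 0 < lam) (hmu : 0 < mu)
    (τ σ : ℕ → Ω → ℝ)
    (hτm : ∀ j, Measurable (τ j)) (hσm : ∀ j, Measurable (σ j))
    (hindep : iIndepFun (Sum.elim τ σ) P)
    (hτ : ∀ j, P.map (τ j) = expMeasure lam)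
    (hσ : ∀ j, P.map (σ j) = expMeasure mu)
    (n : ℕ) :
    P (busyDelta τ σ n)
      = ENNReal.ofReal ((catalan n : ℝ) * lam ^ n * mu ^ (n + 1) / (lam + mu) ^ (2 * n + 1)) := by
  unfold busyDelta
  exact BusyAux.final_prob P lam mu hlam hmu τ σ hτm hσm hindep hτ hσ n
end

section
/- For every integer n ≥ 0, under the conditional probability measure P(·|Δ_n) the random variable σ_n is distributed as Exp(λ+μ) and is independent of the random vector (σ_0,…,σ_{n−1}). (The service time of the last customer of a busy period of length n+1 is exponential of parameter λ+μ, independent of the other service times.) -/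
open MeasureTheory Real Set ProbabilityTheory
open scoped ENNReal NNReal

namespace BusyAux

lemma expMeasure_eq (r : ℝ) : expMeasure r = volume.withDensity (exponentialPDF r) := rfl

lemma expMeasure_apply (r : ℝ) {s : Set ℝ} (hs : MeasurableSet s) :
    expMeasure r s = ∫⁻ x in s, exponentialPDF r x := by
  rw [expMeasure_eq, withDensity_apply _ hs]

lemma expMeasure_Iic {r : ℝ} (hr : 0 < r) (x : ℝ) :
    expMeasure r (Iic x) = ENNReal.ofReal (if 0 ≤ x then 1 - rexp (-(r * x)) else 0) := by
  rw [expMeasure_apply r measurableSet_Iic, lintegral_exponentialPDF_eq_antiDeriv hr]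

lemma expMeasure_singleton (r x : ℝ) : expMeasure r {x} = 0 := by
  rw [expMeasure_eq]
  exact (withDensity_absolutelyContinuous _ _) (measure_singleton x)

lemma expMeasure_Ici {r : ℝ} (hr : 0 < r) {x : ℝ} (hx : 0 ≤ x) :
    expMeasure r (Ici x) = ENNReal.ofReal (rexp (-(r * x))) := by
  haveI : IsProbabilityMeasure (expMeasure r) := isProbabilityMeasure_expMeasure hr
  have h1 : expMeasure r (Ici x) = expMeasure r (Ioi x) := by
    rw [← Ioi_union_left]
    refine le_antisymm ?_ (measure_mono Set.subset_union_left)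
    calc expMeasure r (Ioi x ∪ {x}) ≤ expMeasure r (Ioi x) + expMeasure r {x} :=
          measure_union_le _ _
    _ = expMeasure r (Ioi x) := by rw [expMeasure_singleton, add_zero]
  have h2 : expMeasure r (Ioi x) = 1 - expMeasure r (Iic x) := by
    rw [← Set.compl_Iic, measure_compl measurableSet_Iic (measure_ne_top _ _), measure_univ]
  rw [h1, h2, expMeasure_Iic hr, if_pos hx]
  rw [← ENNReal.ofReal_one, ← ENNReal.ofReal_sub _ (sub_nonneg.2 (Real.exp_le_one_iff.2 (by nlinarith)))]
  congr 1
  ring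

lemma expMeasure_Iio_zero {r : ℝ} : expMeasure r (Iio 0) = 0 := by
  rw [expMeasure_apply r measurableSet_Iio]
  exact lintegral_exponentialPDF_of_nonpos le_rfl

lemma expMeasure_ae_nonneg (r : ℝ) : ∀ᵐ s ∂(expMeasure r), 0 ≤ s := by
  rw [ae_iff]
  have : {s : ℝ | ¬ 0 ≤ s} = Iio 0 := by ext s; simp only [Set.mem_setOf_eq, Set.mem_Iio, not_le]
  rw [this]; exact expMeasure_Iio_zero

lemma pdf_prod_eq {lam mu : ℝ} (hlam : 0 < lam) (hmu : 0 < mu) (s : ℝ) :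
    ENNReal.ofReal (rexp (-(lam * s))) * exponentialPDF mu s
      = ENNReal.ofReal (mu / (lam + mu)) * exponentialPDF (lam + mu) s := by
  rcases le_or_gt 0 s with hs | hs
  · rw [exponentialPDF_of_nonneg hs, exponentialPDF_of_nonneg hs,
      ← ENNReal.ofReal_mul (exp_nonneg _), ← ENNReal.ofReal_mul (by positivity)]
    congr 1
    have he : rexp (-(lam * s)) * rexp (-(mu * s)) = rexp (-((lam + mu) * s)) := by
      rw [← Real.exp_add]; congr 1; ring
    calc rexp (-(lam * s)) * (mu * rexp (-(mu * s)))
        = mu * (rexp (-(lam * s)) * rexp (-(mu * s))) := by ring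
      _ = mu * rexp (-((lam + mu) * s)) := by rw [he]
      _ = mu / (lam + mu) * ((lam + mu) * rexp (-((lam + mu) * s))) := by field_simp
  · rw [exponentialPDF_of_neg hs, exponentialPDF_of_neg hs, mul_zero, mul_zero]

lemma J_eq_s5 {lam mu : ℝ} (hlam : 0 < lam) (hmu : 0 < mu) {B : Set ℝ} (hB : MeasurableSet B) :
    ∫⁻ s in B, ENNReal.ofReal (rexp (-(lam * s))) ∂(expMeasure mu)
      = ENNReal.ofReal (mu / (lam + mu)) * expMeasure (lam + mu) B := by
  have hm : Measurable (exponentialPDF mu) := (measurable_exponentialPDFReal mu).ennreal_ofReal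
  rw [expMeasure_eq, restrict_withDensity hB, lintegral_withDensity_eq_lintegral_mul _ hm]
  · have : ∀ s : ℝ, (exponentialPDF mu * fun s => ENNReal.ofReal (rexp (-(lam * s)))) s
        = ENNReal.ofReal (mu / (lam + mu)) * exponentialPDF (lam + mu) s := fun s => by
      rw [Pi.mul_apply, mul_comm]; exact pdf_prod_eq hlam hmu s
    rw [lintegral_congr this, lintegral_const_mul _ (by
      exact (measurable_exponentialPDFReal (lam+mu)).ennreal_ofReal)]
    rw [← expMeasure_apply _ hB]
  · exact (Real.measurable_exp.comp (by fun_prop)).ennreal_ofReal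

lemma inner_eq {lam mu : ℝ} (hlam : 0 < lam) (hmu : 0 < mu) {c : ℝ} (hc : 0 ≤ c)
    {B : Set ℝ} (hB : MeasurableSet B) :
    ((expMeasure mu).prod (expMeasure lam)) {u : ℝ × ℝ | u.1 ∈ B ∧ u.1 + c ≤ u.2}
      = ENNReal.ofReal (rexp (-(lam * c)))
        * (ENNReal.ofReal (mu / (lam + mu)) * expMeasure (lam + mu) B) := by
  haveI : IsProbabilityMeasure (expMeasure lam) := isProbabilityMeasure_expMeasure hlam
  haveI : IsProbabilityMeasure (expMeasure mu) := isProbabilityMeasure_expMeasure hmu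
  have hE : MeasurableSet {u : ℝ × ℝ | u.1 ∈ B ∧ u.1 + c ≤ u.2} :=
    (hB.preimage measurable_fst).inter
      (measurableSet_le (measurable_fst.add_const c) measurable_snd)
  rw [Measure.prod_apply hE]
  have h1 : ∀ s : ℝ, expMeasure lam (Prod.mk s ⁻¹' {u : ℝ × ℝ | u.1 ∈ B ∧ u.1 + c ≤ u.2})
      = B.indicator (fun s => expMeasure lam (Ici (s + c))) s := by
    intro s
    by_cases hs : s ∈ B
    · rw [Set.indicator_of_mem hs]
      congr 1
      ext t; simp [hs]
    · rw [Set.indicator_of_notMem hs]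
      have : Prod.mk s ⁻¹' {u : ℝ × ℝ | u.1 ∈ B ∧ u.1 + c ≤ u.2} = (∅ : Set ℝ) := by
        ext t; simp [hs]
      rw [this, measure_empty]
  rw [lintegral_congr h1, lintegral_indicator hB]
  have h2 : ∀ᵐ s ∂((expMeasure mu).restrict B),
      expMeasure lam (Ici (s + c))
        = ENNReal.ofReal (rexp (-(lam * c))) * ENNReal.ofReal (rexp (-(lam * s))) := by
    refine ae_restrict_of_ae ((expMeasure_ae_nonneg mu).mono fun s hs => ?_)
    rw [expMeasure_Ici hlam (by linarith), ← ENNReal.ofReal_mul (exp_nonneg _), ← Real.exp_add]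
    congr 2; ring
  rw [lintegral_congr_ae h2, lintegral_const_mul _ (by
    exact (Real.measurable_exp.comp (by fun_prop)).ennreal_ofReal), J_eq_s5 hlam hmu hB]

lemma expMeasure_Ioc_ne_zero {r : ℝ} (hr : 0 < r) : expMeasure r (Ioc 0 1) ≠ 0 := by
  have h0 : expMeasure r (Iic (0:ℝ)) = 0 := by
    rw [expMeasure_Iic hr, if_pos le_rfl]
    simp
  have : expMeasure r (Ioc (0:ℝ) 1) = expMeasure r (Iic 1) - expMeasure r (Iic 0) := by
    rw [← (show Iic (1:ℝ) \ Iic 0 = Ioc 0 1 by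
      ext x; simp only [Set.mem_diff, Set.mem_Iic, Set.mem_Ioc, not_le]; exact and_comm), measure_diff (Set.Iic_subset_Iic.mpr zero_le_one)
      measurableSet_Iic.nullMeasurableSet (by rw [h0]; exact ENNReal.zero_ne_top)]
  rw [this, h0, tsub_zero, expMeasure_Iic hr, if_pos zero_le_one]
  refine (ENNReal.ofReal_pos.mpr ?_).ne'
  have : rexp (-(r * 1)) < 1 := Real.exp_lt_one_iff.mpr (by linarith)
  linarith

lemma expMeasure_Ioi_one_ne_zero {r : ℝ} (hr : 0 < r) : expMeasure r (Ioi 1) ≠ 0 := by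
  have h2 : expMeasure r (Ici (2:ℝ)) = ENNReal.ofReal (rexp (-(r * 2))) :=
    expMeasure_Ici hr (by norm_num)
  have hpos : (0:ℝ≥0∞) < expMeasure r (Ici (2:ℝ)) := by
    rw [h2]; exact ENNReal.ofReal_pos.mpr (exp_pos _)
  have hle : expMeasure r (Ici (2:ℝ)) ≤ expMeasure r (Ioi 1) :=
    measure_mono (fun x (hx : x ∈ Ici (2:ℝ)) => Set.mem_Ioi.mpr (lt_of_lt_of_le (by norm_num) (Set.mem_Ici.mp hx)))
  exact (lt_of_lt_of_le hpos hle).ne'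

lemma sum_ite_lt (f : ℕ → ℝ) {k n : ℕ} (h : k ≤ n) :
    ∑ j ∈ Finset.range k, (if j < n then f j else 0) = ∑ j ∈ Finset.range k, f j :=
  Finset.sum_congr rfl fun j hj => if_pos (lt_of_lt_of_le (Finset.mem_range.mp hj) h)

end BusyAux

open MeasureTheory ProbabilityTheory BusyAux

/-- under `P(·|Δ_n)`, the last service `σ_n` is distributed as `Exp(λ+μ)` and is
independent of the vector `(σ_0, …, σ_{n-1})`. -/
theorem condLaw_last_service
    {Ω : Type*} [MeasurableSpace Ω] (P : Measure Ω) [IsProbabilityMeasure P]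
    (lam mu : ℝ) (hlam : 0 < lam) (hmu : 0 < mu)
    (τ σ : ℕ → Ω → ℝ)
    (hτm : ∀ j, Measurable (τ j)) (hσm : ∀ j, Measurable (σ j))
    (hindep : iIndepFun (Sum.elim τ σ) P)
    (hτ : ∀ j, P.map (τ j) = expMeasure lam)
    (hσ : ∀ j, P.map (σ j) = expMeasure mu)
    (n : ℕ) :
    (P[|busyDelta τ σ n]).map (σ n) = expMeasure (lam + mu) ∧
    IndepFun (σ n) (fun ω (i : Fin n) => σ i ω) (P[|busyDelta τ σ n]) := by
  classical
  have hlm : (0:ℝ) < lam + mu := by linarith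
  haveI hνP : IsProbabilityMeasure (expMeasure (lam + mu)) :=
    isProbabilityMeasure_expMeasure hlm
  haveI : IsProbabilityMeasure (expMeasure lam) := isProbabilityMeasure_expMeasure hlam
  haveI : IsProbabilityMeasure (expMeasure mu) := isProbabilityMeasure_expMeasure hmu
  -- notation
  set vec : Ω → Fin n → ℝ := fun ω (i : Fin n) => σ i ω with hvecdef
  set W : Ω → (ℕ → ℝ) × (ℕ → ℝ) := fun ω =>
    (fun j => if j < n then τ j ω else 0, fun j => if j < n then σ j ω else 0) with hWdef
  set U : Ω → ℝ × ℝ := fun ω => (σ n ω, τ n ω) with hUdef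
  have hτ' : ∀ j, Measurable fun ω => if j < n then τ j ω else 0 := fun j => by
    by_cases h : j < n
    · simp only [if_pos h]; exact hτm j
    · simp only [if_neg h]; exact measurable_const
  have hσ' : ∀ j, Measurable fun ω => if j < n then σ j ω else 0 := fun j => by
    by_cases h : j < n
    · simp only [if_pos h]; exact hσm j
    · simp only [if_neg h]; exact measurable_const
  have hWmeas : Measurable W :=
    (measurable_pi_lambda _ hτ').prodMk (measurable_pi_lambda _ hσ')
  have hUmeas : Measurable U := (hσm n).prodMk (hτm n)
  -- independence of the blocks
  set S : Finset (ℕ ⊕ ℕ) :=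
    ((Finset.range n).image Sum.inl) ∪ ((Finset.range n).image Sum.inr) with hSdef
  set T : Finset (ℕ ⊕ ℕ) := {Sum.inl n, Sum.inr n} with hTdef
  have hST : Disjoint S T := by
    rw [Finset.disjoint_left]
    intro a haS haT
    simp only [hSdef, Finset.mem_union, Finset.mem_image, Finset.mem_range] at haS
    simp only [hTdef, Finset.mem_insert, Finset.mem_singleton] at haT
    rcases haS with ⟨j, hj, rfl⟩ | ⟨j, hj, rfl⟩ <;> rcases haT with h | h <;>
      simp_all <;> omega
  have hmeasf : ∀ i : ℕ ⊕ ℕ, Measurable (Sum.elim τ σ i) := by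
    intro i; cases i with
    | inl j => exact hτm j
    | inr j => exact hσm j
  have hinlS : ∀ j, j < n → Sum.inl j ∈ S := fun j hj =>
    Finset.mem_union_left _ (Finset.mem_image_of_mem _ (Finset.mem_range.mpr hj))
  have hinrS : ∀ j, j < n → Sum.inr j ∈ S := fun j hj =>
    Finset.mem_union_right _ (Finset.mem_image_of_mem _ (Finset.mem_range.mpr hj))
  have hinlT : Sum.inl n ∈ T := Finset.mem_insert_self _ _
  have hinrT : Sum.inr n ∈ T := Finset.mem_insert_of_mem (Finset.mem_singleton_self _)
  set φ : (S → ℝ) → (ℕ → ℝ) × (ℕ → ℝ) := fun v =>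
    (fun j => if h : j < n then v ⟨Sum.inl j, hinlS j h⟩ else 0,
     fun j => if h : j < n then v ⟨Sum.inr j, hinrS j h⟩ else 0) with hφdef
  set ψ : (T → ℝ) → ℝ × ℝ := fun v => (v ⟨Sum.inr n, hinrT⟩, v ⟨Sum.inl n, hinlT⟩) with hψdef
  have hφmeas : Measurable φ := by
    refine Measurable.prodMk ?_ ?_ <;>
    · refine measurable_pi_lambda _ fun j => ?_
      by_cases h : j < n
      · simp only [dif_pos h]; exact measurable_pi_apply _
      · simp only [dif_neg h]; exact measurable_const
  have hψmeas : Measurable ψ :=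
    (measurable_pi_apply _).prodMk (measurable_pi_apply _)
  have hWU : IndepFun W U P := by
    have hbase := hindep.indepFun_finset S T hST hmeasf
    have h := hbase.comp hφmeas hψmeas
    have e1 : (φ ∘ fun a (i : S) => Sum.elim τ σ (↑i) a) = W := by
      funext ω
      simp only [Function.comp_apply, hφdef, hWdef]
      refine Prod.ext ?_ ?_ <;>
      · funext j
        by_cases h : j < n <;> simp [h]
    have e2 : (ψ ∘ fun a (i : T) => Sum.elim τ σ (↑i) a) = U := by
      funext ω
      simp only [Function.comp_apply, hψdef, hUdef, Sum.elim_inl, Sum.elim_inr]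
    rwa [e1, e2] at h
  have hWUlaw : P.map (fun ω => (W ω, U ω)) = (P.map W).prod (P.map U) :=
    (indepFun_iff_map_prod_eq_prod_map_map hWmeas.aemeasurable hUmeas.aemeasurable).mp hWU
  have hUlaw : P.map U = (expMeasure mu).prod (expMeasure lam) := by
    have hστ : IndepFun (σ n) (τ n) P := by
      have := hindep.indepFun (show (Sum.inr n : ℕ ⊕ ℕ) ≠ Sum.inl n by simp)
      exact this
    rw [hUdef, (indepFun_iff_map_prod_eq_prod_map_map (hσm n).aemeasurable
      (hτm n).aemeasurable).mp hστ, hσ n, hτ n]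
  -- the past event and gap in coordinates
  set Dn : Set ((ℕ → ℝ) × (ℕ → ℝ)) := {w | ∀ i < n,
    ∑ j ∈ Finset.range (i + 1), w.1 j < ∑ j ∈ Finset.range (i + 1), w.2 j} with hDndef
  set γ : ((ℕ → ℝ) × (ℕ → ℝ)) → ℝ := fun w =>
    ∑ j ∈ Finset.range n, w.2 j - ∑ j ∈ Finset.range n, w.1 j with hγdef
  set vm : ((ℕ → ℝ) × (ℕ → ℝ)) → (Fin n → ℝ) := fun w (i : Fin n) => w.2 i with hvmdef
  have hsum1 : ∀ k : ℕ, Measurable (fun w : (ℕ → ℝ) × (ℕ → ℝ) =>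
      ∑ j ∈ Finset.range k, w.1 j) := fun k =>
    Finset.measurable_sum _ fun j _ => (measurable_pi_apply j).comp measurable_fst
  have hsum2 : ∀ k : ℕ, Measurable (fun w : (ℕ → ℝ) × (ℕ → ℝ) =>
      ∑ j ∈ Finset.range k, w.2 j) := fun k =>
    Finset.measurable_sum _ fun j _ => (measurable_pi_apply j).comp measurable_snd
  have hDn : MeasurableSet Dn := by
    have : Dn = ⋂ i, ⋂ _h : i < n, {w : (ℕ → ℝ) × (ℕ → ℝ) |
        ∑ j ∈ Finset.range (i + 1), w.1 j < ∑ j ∈ Finset.range (i + 1), w.2 j} := by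
      ext w; simp [hDndef, Set.mem_iInter]
    rw [this]
    exact MeasurableSet.iInter fun i => MeasurableSet.iInter fun _ =>
      measurableSet_lt (hsum1 _) (hsum2 _)
  have hγm : Measurable γ := (hsum2 n).sub (hsum1 n)
  have hvmm : Measurable vm :=
    measurable_pi_lambda _ fun i => (measurable_pi_apply _).comp measurable_snd
  have hγnn : ∀ w ∈ Dn, 0 ≤ γ w := by
    intro w hw
    rcases Nat.eq_zero_or_pos n with h0 | hpos
    · simp [hγdef, h0]
    · have := hw (n - 1) (by omega)
      have hrw : n - 1 + 1 = n := by omega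
      rw [hrw] at this
      simp only [hγdef]; linarith
  -- the event in coordinates
  set E : Set ℝ → Set (Fin n → ℝ) → Set (((ℕ → ℝ) × (ℕ → ℝ)) × ℝ × ℝ) := fun B C =>
    {p | p.1 ∈ Dn ∧ vm p.1 ∈ C ∧ p.2.1 ∈ B ∧ p.2.1 + γ p.1 ≤ p.2.2} with hEdef
  have hEmeas : ∀ B C, MeasurableSet B → MeasurableSet C → MeasurableSet (E B C) := by
    intro B C hB hC
    convert ((hDn.preimage measurable_fst).inter
      ((hvmm.comp measurable_fst) hC)).inter
      (((hB.preimage (measurable_fst.comp measurable_snd))).inter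
        (measurableSet_le ((measurable_fst.comp measurable_snd).add
          (hγm.comp measurable_fst)) (measurable_snd.comp measurable_snd))) using 1
    ext p
    simp only [hEdef, Set.mem_setOf_eq, Set.mem_inter_iff, Set.mem_preimage,
      Function.comp_apply]
    tauto
  -- set identity
  have hset : ∀ (B : Set ℝ) (C : Set (Fin n → ℝ)),
      busyDelta τ σ n ∩ σ n ⁻¹' B ∩ vec ⁻¹' C = (fun ω => (W ω, U ω)) ⁻¹' (E B C) := by
    intro B C
    ext ω
    have f1 : ∀ k, k ≤ n → ∑ j ∈ Finset.range k, (W ω).1 j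
        = ∑ j ∈ Finset.range k, τ j ω := fun k hk => sum_ite_lt _ hk
    have f2 : ∀ k, k ≤ n → ∑ j ∈ Finset.range k, (W ω).2 j
        = ∑ j ∈ Finset.range k, σ j ω := fun k hk => sum_ite_lt _ hk
    have f3 : vm (W ω) = vec ω := by
      funext i; simp only [hvmdef, hWdef, hvecdef, if_pos i.isLt]
    simp only [Set.mem_inter_iff, Set.mem_preimage, Set.mem_setOf_eq, hEdef, busyDelta,
      Set.mem_setOf_eq, hDndef]
    constructor
    · rintro ⟨⟨⟨h1, h2⟩, hB⟩, hC⟩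
      refine ⟨fun i hi => ?_, by rwa [f3], hB, ?_⟩
      · rw [f1 _ (by omega), f2 _ (by omega)]; exact h1 i hi
      · simp only [hγdef, hUdef]
        rw [f1 _ le_rfl, f2 _ le_rfl]
        rw [Finset.sum_range_succ, Finset.sum_range_succ] at h2
        linarith
    · rintro ⟨h1, hC, hB, h2⟩
      refine ⟨⟨⟨fun i hi => ?_, ?_⟩, hB⟩, by rwa [f3] at hC⟩
      · have := h1 i hi
        rwa [f1 _ (by omega), f2 _ (by omega)] at this
      · simp only [hγdef, hUdef] at h2
        rw [f1 _ le_rfl, f2 _ le_rfl] at h2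
        rw [Finset.sum_range_succ, Finset.sum_range_succ]
        linarith
  -- master formula
  set I : Set (Fin n → ℝ) → ℝ≥0∞ := fun C =>
    ∫⁻ w in Dn ∩ vm ⁻¹' C, ENNReal.ofReal (Real.exp (-(lam * γ w))) ∂(P.map W) with hIdef
  have hexpm : Measurable fun w : (ℕ → ℝ) × (ℕ → ℝ) =>
      ENNReal.ofReal (Real.exp (-(lam * γ w))) :=
    (Real.measurable_exp.comp ((hγm.const_mul lam).neg)).ennreal_ofReal
  have master : ∀ (B : Set ℝ) (C : Set (Fin n → ℝ)), MeasurableSet B → MeasurableSet C →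
      P (busyDelta τ σ n ∩ σ n ⁻¹' B ∩ vec ⁻¹' C)
        = I C * (ENNReal.ofReal (mu / (lam + mu)) * expMeasure (lam + mu) B) := by
    intro B C hB hC
    rw [hset B C, ← Measure.map_apply (hWmeas.prodMk hUmeas) (hEmeas B C hB hC),
      hWUlaw, hUlaw, Measure.prod_apply (hEmeas B C hB hC)]
    have h1 : ∀ w, ((expMeasure mu).prod (expMeasure lam)) (Prod.mk w ⁻¹' E B C)
        = (Dn ∩ vm ⁻¹' C).indicator
            (fun w => ((expMeasure mu).prod (expMeasure lam))
              {u : ℝ × ℝ | u.1 ∈ B ∧ u.1 + γ w ≤ u.2}) w := by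
      intro w
      by_cases hw : w ∈ Dn ∩ vm ⁻¹' C
      · rw [Set.indicator_of_mem hw]
        congr 1
        ext u
        simp only [hEdef, Set.mem_preimage, Set.mem_setOf_eq]
        exact ⟨fun h => ⟨h.2.2.1, h.2.2.2⟩, fun h => ⟨hw.1, hw.2, h.1, h.2⟩⟩
      · have he : Prod.mk w ⁻¹' E B C = (∅ : Set (ℝ × ℝ)) := by
          ext u
          simp only [hEdef, Set.mem_preimage, Set.mem_setOf_eq, Set.mem_empty_iff_false,
            iff_false, not_and]
          intro h1 h2
          exact absurd ⟨h1, h2⟩ hw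
        rw [Set.indicator_of_notMem hw, he, measure_empty]
    rw [lintegral_congr h1, lintegral_indicator (hDn.inter (hC.preimage hvmm))]
    have h2 : ∀ᵐ w ∂((P.map W).restrict (Dn ∩ vm ⁻¹' C)),
        ((expMeasure mu).prod (expMeasure lam)) {u : ℝ × ℝ | u.1 ∈ B ∧ u.1 + γ w ≤ u.2}
          = ENNReal.ofReal (Real.exp (-(lam * γ w)))
            * (ENNReal.ofReal (mu / (lam + mu)) * expMeasure (lam + mu) B) := by
      refine (ae_restrict_mem (hDn.inter (hC.preimage hvmm))).mono fun w hw => ?_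
      exact inner_eq hlam hmu (hγnn w hw.1) hB
    rw [lintegral_congr_ae h2, lintegral_mul_const _ hexpm]
  -- measurability of the busy-period event
  have hA : MeasurableSet (busyDelta τ σ n) := by
    have h0 : busyDelta τ σ n
        = busyDelta τ σ n ∩ σ n ⁻¹' Set.univ ∩ vec ⁻¹' Set.univ := by simp
    rw [h0, hset]
    exact (hWmeas.prodMk hUmeas) (hEmeas _ _ MeasurableSet.univ MeasurableSet.univ)
  set k : ℝ≥0∞ := ENNReal.ofReal (mu / (lam + mu)) with hkdef
  have hPA : P (busyDelta τ σ n) = I Set.univ * k := by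
    have h0 : busyDelta τ σ n
        = busyDelta τ σ n ∩ σ n ⁻¹' Set.univ ∩ vec ⁻¹' Set.univ := by simp
    rw [h0, master Set.univ Set.univ MeasurableSet.univ MeasurableSet.univ,
      measure_univ, mul_one]
  -- positivity
  have hIuniv_ne : I Set.univ ≠ 0 := by
    have hU : Dn ∩ vm ⁻¹' (Set.univ : Set (Fin n → ℝ)) = Dn := by simp
    have hsupp : Function.support (fun w : (ℕ → ℝ) × (ℕ → ℝ) =>
        ENNReal.ofReal (Real.exp (-(lam * γ w)))) = Set.univ := by
      ext w
      simp [Function.mem_support, (ENNReal.ofReal_pos.mpr (Real.exp_pos _)).ne']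
    have hDn_ne : (P.map W) Dn ≠ 0 := by
      rw [Measure.map_apply hWmeas hDn]
      set sets : ℕ ⊕ ℕ → Set ℝ :=
        Sum.elim (fun _ => Set.Ioc 0 1) (fun _ => Set.Ioi 1) with hsetsdef
      have hsm : ∀ i, i ∈ S → MeasurableSet (sets i) := by
        intro i _
        cases i with
        | inl j => exact measurableSet_Ioc
        | inr j => exact measurableSet_Ioi
      have hprod := hindep.measure_inter_preimage_eq_mul S hsm
      have hsub : (⋂ i ∈ S, Sum.elim τ σ i ⁻¹' sets i) ⊆ W ⁻¹' Dn := by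
        intro ω hω
        simp only [Set.mem_iInter] at hω
        have hτIoc : ∀ j, j < n → τ j ω ∈ Set.Ioc (0:ℝ) 1 := fun j hj =>
          hω (Sum.inl j) (hinlS j hj)
        have hσIoi : ∀ j, j < n → (1:ℝ) < σ j ω := fun j hj =>
          hω (Sum.inr j) (hinrS j hj)
        simp only [Set.mem_preimage, hDndef, Set.mem_setOf_eq, hWdef]
        intro i hi
        rw [sum_ite_lt _ (by omega : i + 1 ≤ n), sum_ite_lt _ (by omega : i + 1 ≤ n)]
        have hle : ∑ j ∈ Finset.range (i+1), τ j ω ≤ ((i+1 : ℕ) : ℝ) := by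
          calc ∑ j ∈ Finset.range (i+1), τ j ω ≤ ∑ _j ∈ Finset.range (i+1), (1:ℝ) :=
                Finset.sum_le_sum fun j hj =>
                  (hτIoc j (by have := Finset.mem_range.mp hj; omega)).2
            _ = ((i+1 : ℕ) : ℝ) := by simp
        have hlt : ((i+1 : ℕ) : ℝ) < ∑ j ∈ Finset.range (i+1), σ j ω := by
          calc ((i+1 : ℕ) : ℝ) = ∑ _j ∈ Finset.range (i+1), (1:ℝ) := by simp
            _ < ∑ j ∈ Finset.range (i+1), σ j ω :=
                Finset.sum_lt_sum_of_nonempty Finset.nonempty_range_add_one fun j hj =>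
                  hσIoi j (by have := Finset.mem_range.mp hj; omega)
        linarith
      have hfac : ∀ i ∈ S, P (Sum.elim τ σ i ⁻¹' sets i) ≠ 0 := by
        intro i _
        cases i with
        | inl j =>
          have heq : P (τ j ⁻¹' Set.Ioc 0 1) = expMeasure lam (Set.Ioc 0 1) := by
            rw [← hτ j, Measure.map_apply (hτm j) measurableSet_Ioc]
          simpa [hsetsdef, heq] using expMeasure_Ioc_ne_zero hlam
        | inr j =>
          have heq : P (σ j ⁻¹' Set.Ioi 1) = expMeasure mu (Set.Ioi 1) := by
            rw [← hσ j, Measure.map_apply (hσm j) measurableSet_Ioi]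
          simpa [hsetsdef, heq] using expMeasure_Ioi_one_ne_zero hmu
      have hG_ne : P (⋂ i ∈ S, Sum.elim τ σ i ⁻¹' sets i) ≠ 0 := by
        rw [hprod]
        exact Finset.prod_ne_zero_iff.mpr hfac
      exact fun h0 => hG_ne (le_antisymm (h0 ▸ measure_mono hsub) (by simp))
    have hpos : 0 < I Set.univ := by
      rw [hIdef]
      simp only [hU]
      rw [lintegral_pos_iff_support hexpm, hsupp, Measure.restrict_apply_univ]
      exact pos_iff_ne_zero.mpr hDn_ne
    exact hpos.ne'
  have hk0 : k ≠ 0 := by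
    rw [hkdef]
    exact (ENNReal.ofReal_pos.mpr (by positivity)).ne'
  have hPA0 : P (busyDelta τ σ n) ≠ 0 := by rw [hPA]; exact mul_ne_zero hIuniv_ne hk0
  have hPAtop : P (busyDelta τ σ n) ≠ ⊤ := measure_ne_top _ _
  -- conclusion, part 1
  have hmap : (P[|busyDelta τ σ n]).map (σ n) = expMeasure (lam + mu) := by
    refine Measure.ext fun B hB => ?_
    rw [Measure.map_apply (hσm n) hB, cond_apply hA P]
    have h1 : busyDelta τ σ n ∩ σ n ⁻¹' B
        = busyDelta τ σ n ∩ σ n ⁻¹' B ∩ vec ⁻¹' Set.univ := by simp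
    rw [h1, master B Set.univ hB MeasurableSet.univ, hPA]
    have hae : I Set.univ * (k * expMeasure (lam + mu) B)
        = (I Set.univ * k) * expMeasure (lam + mu) B := by ring
    rw [hae, ← mul_assoc, ENNReal.inv_mul_cancel (hPA ▸ hPA0) (hPA ▸ hPAtop), one_mul]
  refine ⟨hmap, ?_⟩
  -- conclusion, part 2
  rw [indepFun_iff_measure_inter_preimage_eq_mul]
  intro B C hB hC
  have hBν : (P[|busyDelta τ σ n]) (σ n ⁻¹' B) = expMeasure (lam + mu) B := by
    rw [← Measure.map_apply (hσm n) hB, hmap]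
  rw [cond_apply hA P, cond_apply hA P, cond_apply hA P] at *
  have h1 : busyDelta τ σ n ∩ (σ n ⁻¹' B ∩ (fun ω (i : Fin n) => σ (↑i) ω) ⁻¹' C)
      = busyDelta τ σ n ∩ σ n ⁻¹' B ∩ vec ⁻¹' C := by
    rw [Set.inter_assoc]
  have h2 : busyDelta τ σ n ∩ (fun ω (i : Fin n) => σ (↑i) ω) ⁻¹' C
      = busyDelta τ σ n ∩ σ n ⁻¹' Set.univ ∩ vec ⁻¹' C := by simp [hvecdef]
  rw [h1, h2, master B C hB hC, master Set.univ C MeasurableSet.univ hC, measure_univ,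
    mul_one, hBν, hPA]
  ring
end

section
/- For every integer k ≥ 0, 𝓡_k^{(k)}(z) = C_k · z, and for all integers n > k ≥ 1 the polynomial identity 𝓡_n^{(k)}(z) = Σ_{i=k}^{n−1} 𝓡_i^{(k)}(z) · C_{n−1−i} + Σ_{l=0}^{k−1} C_{k−1−l} · 𝓡_{n−k+l}^{(l)}(z) holds (first-return decomposition of Dyck paths applied to the generating polynomials 𝓡_n^{(k)}). -/
/-- A path of length `2n` is encoded by `w : Fin (2*n) → Bool`, where `true` stands for a step
`(1,1)` and `false` for a step `(1,-1)`. `upCount n w m` is the number of up-steps among the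
first `m` steps; the height of the path after `m` steps is `2 * upCount n w m - m`. -/
def upCount (n : ℕ) (w : Fin (2 * n) → Bool) (m : ℕ) : ℕ :=
  (Finset.univ.filter (fun p : Fin (2 * n) => (p : ℕ) < m ∧ w p = true)).card

/-- `w` encodes a Dyck path of length `2n`: starts at `(0,0)`, ends at `(2n,0)`, stays weakly
above the x-axis. -/
def IsDyckPath (n : ℕ) (w : Fin (2 * n) → Bool) : Prop :=
  (∀ m ≤ 2 * n, m ≤ 2 * upCount n w m) ∧ upCount n w (2 * n) = n

open Classical in
/-- The finite set `𝒟_n` of Dyck paths of length `2n`. -/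
noncomputable def dyckPaths (n : ℕ) : Finset (Fin (2 * n) → Bool) :=
  Finset.univ.filter (fun w => IsDyckPath n w)

/-- `alpha n w j + 1` is the number of lattice points common to the path `w` and the line
`y = x - 2j`, i.e. the number of `m ∈ {0, …, 2n}` with height `2 * upCount n w m - m = m - 2j`,
equivalently `upCount n w m + j = m`. -/
def alpha (n : ℕ) (w : Fin (2 * n) → Bool) (j : ℕ) : ℕ :=
  ((Finset.range (2 * n + 1)).filter (fun m => upCount n w m + j = m)).card - 1

/- ### counting infrastructure on ℕ → Bool -/

def cnt (W : ℕ → Bool) (m : ℕ) : ℕ :=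
  ((Finset.range m).filter (fun p => W p = true)).card

lemma cnt_zero (W : ℕ → Bool) : cnt W 0 = 0 := by simp [cnt]

lemma cnt_succ (W : ℕ → Bool) (m : ℕ) :
    cnt W (m + 1) = cnt W m + (if W m then 1 else 0) := by
  unfold cnt
  rw [Finset.range_add_one, Finset.filter_insert]
  split
  · rw [Finset.card_insert_of_notMem (by simp)]
  · simp

lemma cnt_le (W : ℕ → Bool) (m : ℕ) : cnt W m ≤ m := by
  induction m with
  | zero => simp [cnt_zero]
  | succ m ih => rw [cnt_succ]; split <;> omega

lemma cnt_congr {W W' : ℕ → Bool} (m : ℕ) (h : ∀ i < m, W i = W' i) :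
    cnt W m = cnt W' m := by
  unfold cnt
  congr 1
  apply Finset.filter_congr
  intro x hx
  simp only [Finset.mem_range] at hx
  rw [h x hx]

lemma cnt_add (W : ℕ → Bool) (a j : ℕ) :
    cnt W (a + j) = cnt W a + cnt (fun i => W (a + i)) j := by
  induction j with
  | zero => simp [cnt_zero]
  | succ j ih =>
    rw [← Nat.add_assoc, cnt_succ, ih, cnt_succ]
    ring

lemma cnt_mono (W : ℕ → Bool) {a b : ℕ} (h : a ≤ b) : cnt W a ≤ cnt W b := by
  have h1 := cnt_add W a (b - a)
  rw [Nat.add_sub_cancel' h] at h1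
  omega

lemma cnt_one (W : ℕ → Bool) : cnt W 1 = if W 0 then 1 else 0 := by
  rw [show (1:ℕ) = 0 + 1 from rfl, cnt_succ, cnt_zero, Nat.zero_add]

lemma cnt_sub_mono (W : ℕ → Bool) {a b : ℕ} (h : a ≤ b) :
    a - cnt W a ≤ b - cnt W b := by
  have h1 : cnt W b ≤ cnt W a + (b - a) := by
    have h0 := cnt_add W a (b - a)
    rw [Nat.add_sub_cancel' h] at h0
    have h2 := cnt_le (fun i => W (a + i)) (b - a)
    omega
  have := cnt_le W a
  omega

/- ### relating upCount to cnt -/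

def extW (n : ℕ) (w : Fin (2 * n) → Bool) : ℕ → Bool :=
  fun m => if h : m < 2 * n then w ⟨m, h⟩ else false

lemma upCount_eq (n : ℕ) (w : Fin (2 * n) → Bool) (m : ℕ) :
    upCount n w m = cnt (extW n w) m := by
  unfold upCount cnt
  refine Finset.card_bij (fun p _ => (p : ℕ)) ?_ ?_ ?_
  · intro p hp
    simp only [Finset.mem_filter, Finset.mem_univ, true_and] at hp
    simp only [Finset.mem_filter, Finset.mem_range]
    refine ⟨hp.1, ?_⟩
    simp [extW, p.isLt, hp.2]
  · intro p _ q _ h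
    exact Fin.ext h
  · intro q hq
    simp only [Finset.mem_filter, Finset.mem_range] at hq
    by_cases h : q < 2 * n
    · refine ⟨⟨q, h⟩, ?_, rfl⟩
      simp only [Finset.mem_filter, Finset.mem_univ, true_and]
      refine ⟨hq.1, ?_⟩
      have := hq.2
      simpa [extW, h] using this
    · exfalso; have := hq.2; simp [extW, h] at this

lemma isDyck_iff (n : ℕ) (w : Fin (2 * n) → Bool) :
    IsDyckPath n w ↔
      (∀ m ≤ 2 * n, m ≤ 2 * cnt (extW n w) m) ∧ cnt (extW n w) (2 * n) = n := by
  unfold IsDyckPath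
  simp_rw [upCount_eq]

lemma mem_dyckPaths {n : ℕ} {w : Fin (2 * n) → Bool} :
    w ∈ dyckPaths n ↔ IsDyckPath n w := by
  simp [dyckPaths]

/- ### glueing -/

def glueW (r : ℕ) (W₁ W₂ : ℕ → Bool) : ℕ → Bool
  | 0 => true
  | (m + 1) =>
      if m < 2 * (r - 1) then W₁ m
      else if m = 2 * (r - 1) then false
      else W₂ (m + 1 - 2 * r)

def glue (n r : ℕ) (w₁ : Fin (2 * (r - 1)) → Bool) (w₂ : Fin (2 * (n - r)) → Bool) :
    Fin (2 * n) → Bool :=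
  fun p => glueW r (extW (r - 1) w₁) (extW (n - r) w₂) p.val

lemma cnt_glueW_low {r : ℕ} (hr : 1 ≤ r) (W₁ W₂ : ℕ → Bool) {m : ℕ} (hm : m ≤ 2 * (r - 1)) :
    cnt (glueW r W₁ W₂) (m + 1) = cnt W₁ m + 1 := by
  induction m with
  | zero => rw [cnt_one]; simp [glueW, cnt_zero]
  | succ m ih =>
    rw [cnt_succ, ih (by omega), cnt_succ]
    have h1 : glueW r W₁ W₂ (m + 1) = W₁ m := by
      simp only [glueW]; rw [if_pos (by omega)]
    rw [h1]; ring

lemma glueW_mid {r : ℕ} (hr : 1 ≤ r) (W₁ W₂ : ℕ → Bool) :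
    glueW r W₁ W₂ (2 * r - 1) = false := by
  have h1 : 2 * r - 1 = 2 * (r - 1) + 1 := by omega
  rw [h1]
  simp only [glueW]
  rw [if_neg (by omega)]
  simp

lemma cnt_glueW_mid {r : ℕ} (hr : 1 ≤ r) (W₁ W₂ : ℕ → Bool) :
    cnt (glueW r W₁ W₂) (2 * r) = cnt W₁ (2 * (r - 1)) + 1 := by
  have h1 : 2 * r = (2 * (r - 1) + 1) + 1 := by omega
  rw [h1, cnt_succ, cnt_glueW_low hr W₁ W₂ (le_refl _)]
  have h2 : glueW r W₁ W₂ (2 * (r - 1) + 1) = false := by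
    have := glueW_mid hr W₁ W₂
    rwa [show 2 * r - 1 = 2 * (r - 1) + 1 by omega] at this
  rw [h2]; simp

lemma glueW_high {r : ℕ} (hr : 1 ≤ r) (W₁ W₂ : ℕ → Bool) (j : ℕ) :
    glueW r W₁ W₂ (2 * r + j) = W₂ j := by
  have h1 : 2 * r + j = (2 * (r - 1) + 1 + j) + 1 := by omega
  rw [h1]
  simp only [glueW]
  rw [if_neg (by omega), if_neg (by omega)]
  congr 1
  omega

lemma cnt_glueW_high {r : ℕ} (hr : 1 ≤ r) (W₁ W₂ : ℕ → Bool) (j : ℕ) :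
    cnt (glueW r W₁ W₂) (2 * r + j) = cnt (glueW r W₁ W₂) (2 * r) + cnt W₂ j := by
  rw [cnt_add]
  congr 1
  exact cnt_congr j (fun i _ => glueW_high hr W₁ W₂ i)

/- ### first return -/

noncomputable def firstRet (n : ℕ) (w : Fin (2 * n) → Bool) : ℕ :=
  sInf {r | 1 ≤ r ∧ upCount n w (2 * r) = r}

lemma firstRet_spec {n : ℕ} (hn : 1 ≤ n) {w : Fin (2 * n) → Bool} (hw : IsDyckPath n w) :
    (1 ≤ firstRet n w ∧ upCount n w (2 * firstRet n w) = firstRet n w) ∧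
      firstRet n w ≤ n := by
  have hne : n ∈ {r | 1 ≤ r ∧ upCount n w (2 * r) = r} := ⟨hn, hw.2⟩
  exact ⟨Nat.sInf_mem ⟨n, hne⟩, Nat.sInf_le hne⟩

lemma firstRet_min {n : ℕ} {w : Fin (2 * n) → Bool} {s : ℕ} (h1 : 1 ≤ s)
    (h2 : s < firstRet n w) : upCount n w (2 * s) ≠ s := by
  intro h
  exact Nat.notMem_of_lt_sInf h2 ⟨h1, h⟩

/- ### glue of Dyck paths is Dyck with first return r -/

section GlueDyck

variable {n r : ℕ} (hr : 1 ≤ r) (hrn : r ≤ n)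
  {w₁ : Fin (2 * (r - 1)) → Bool} {w₂ : Fin (2 * (n - r)) → Bool}
  (h₁ : IsDyckPath (r - 1) w₁) (h₂ : IsDyckPath (n - r) w₂)

lemma upCount_glue_eq (m : ℕ) (hm : m ≤ 2 * n) :
    upCount n (glue n r w₁ w₂) m
      = cnt (glueW r (extW (r - 1) w₁) (extW (n - r) w₂)) m := by
  rw [upCount_eq]
  apply cnt_congr
  intro i hi
  simp only [extW, glue]
  rw [dif_pos (by omega)]

include hr h₁ in
lemma cnt_glueW_strict {m : ℕ} (h1 : 1 ≤ m) (h2 : m ≤ 2 * r - 1) :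
    m < 2 * cnt (glueW r (extW (r - 1) w₁) (extW (n - r) w₂)) m := by
  obtain ⟨m', rfl⟩ : ∃ m', m = m' + 1 := ⟨m - 1, by omega⟩
  rw [cnt_glueW_low hr _ _ (by omega)]
  rw [isDyck_iff] at h₁
  have := h₁.1 m' (by omega)
  omega

include hr hrn h₁ in
lemma cnt_glueW_ret :
    cnt (glueW r (extW (r - 1) w₁) (extW (n - r) w₂)) (2 * r) = r := by
  rw [cnt_glueW_mid hr]
  rw [isDyck_iff] at h₁
  omega

include hr hrn h₁ h₂ in
lemma glue_isDyck : IsDyckPath n (glue n r w₁ w₂) := by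
  have hret := cnt_glueW_ret hr hrn h₁ (w₂ := w₂)
  rw [isDyck_iff] at h₂ ⊢
  constructor
  · intro m hm
    rw [← upCount_eq, upCount_glue_eq m hm]
    rcases Nat.eq_zero_or_pos m with rfl | hm0
    · simp
    rcases Nat.lt_or_ge m (2 * r) with hmr | hmr
    · have := cnt_glueW_strict hr h₁ (w₂ := w₂) hm0 (by omega)
      omega
    · obtain ⟨j, rfl⟩ : ∃ j, m = 2 * r + j := ⟨m - 2 * r, by omega⟩
      rw [cnt_glueW_high hr, hret]
      have := h₂.1 j (by omega)
      omega
  · rw [← upCount_eq, upCount_glue_eq _ (le_refl _)]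
    have h2n : 2 * n = 2 * r + 2 * (n - r) := by omega
    rw [h2n, cnt_glueW_high hr, hret, h₂.2]
    omega

include hr hrn h₁ h₂ in
lemma glue_firstRet : firstRet n (glue n r w₁ w₂) = r := by
  have hret := cnt_glueW_ret hr hrn h₁ (w₂ := w₂)
  have hd := glue_isDyck hr hrn h₁ h₂
  have hspec := firstRet_spec (by omega) hd
  set R := firstRet n (glue n r w₁ w₂) with hR
  by_contra hne
  rcases Nat.lt_or_ge R r with hlt | hge
  · have := hspec.1.2
    rw [upCount_glue_eq _ (by omega)] at this
    have hs := cnt_glueW_strict hr h₁ (w₂ := w₂) (m := 2 * R) (by omega) (by omega)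
    omega
  · have : r < R := by omega
    apply firstRet_min hr this
    rw [upCount_glue_eq _ (by omega)]
    exact hret

end GlueDyck

/- ### decomposition -/

def chop1 (n r : ℕ) (w : Fin (2 * n) → Bool) : Fin (2 * (r - 1)) → Bool :=
  fun p => extW n w (p.val + 1)

def chop2 (n r : ℕ) (w : Fin (2 * n) → Bool) : Fin (2 * (n - r)) → Bool :=
  fun p => extW n w (p.val + 2 * r)

section Decomp

variable {n r : ℕ} {w : Fin (2 * n) → Bool} (hw : IsDyckPath n w)
  (hr : 1 ≤ r) (hrn : r ≤ n)
  (hret : cnt (extW n w) (2 * r) = r)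
  (hmin : ∀ s, 1 ≤ s → s < r → cnt (extW n w) (2 * s) ≠ s)

include hw hr hrn hret hmin

lemma decomp_strict : ∀ t, 1 ≤ t → t < 2 * r → t < 2 * cnt (extW n w) t := by
  intro t h1 h2
  rw [isDyck_iff] at hw
  have hle := hw.1 t (by omega)
  rcases Nat.even_or_odd t with ⟨s, hs⟩ | ⟨s, hs⟩
  · have hne := hmin s (by omega) (by omega)
    rw [show 2 * s = t by omega] at hne
    omega
  · -- t odd, 2 * cnt even, so they differ
    omega

lemma decomp_zero : extW n w 0 = true := by
  have h1 := decomp_strict hw hr hrn hret hmin 1 (le_refl _) (by omega)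
  have h2 := cnt_one (extW n w)
  by_contra h
  simp only [Bool.not_eq_true] at h
  rw [h] at h2
  simp at h2
  omega

lemma decomp_cnt_pre : cnt (extW n w) (2 * r - 1) = r := by
  have h1 := decomp_strict hw hr hrn hret hmin (2 * r - 1) (by omega) (by omega)
  have h2 := cnt_mono (extW n w) (show 2 * r - 1 ≤ 2 * r by omega)
  omega

lemma decomp_mid : extW n w (2 * r - 1) = false := by
  have h1 := decomp_cnt_pre hw hr hrn hret hmin
  have h2 : cnt (extW n w) (2 * r) = cnt (extW n w) (2 * r - 1)
      + (if extW n w (2 * r - 1) then 1 else 0) := by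
    rw [show 2 * r = (2 * r - 1) + 1 by omega] at hret ⊢
    exact cnt_succ _ _
  by_contra h
  simp only [Bool.not_eq_false] at h
  rw [h] at h2
  simp at h2
  omega

lemma cnt_chop1 (m : ℕ) (hm : m ≤ 2 * (r - 1)) :
    cnt (extW (r - 1) (chop1 n r w)) m + 1 = cnt (extW n w) (m + 1) := by
  have h0 := decomp_zero hw hr hrn hret hmin
  have h1 : cnt (extW n w) (1 + m) = cnt (extW n w) 1 + cnt (fun i => extW n w (1 + i)) m :=
    cnt_add _ 1 m
  rw [cnt_one, h0, if_pos rfl, Nat.add_comm 1 m] at h1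
  have h2 : cnt (extW (r - 1) (chop1 n r w)) m = cnt (fun i => extW n w (1 + i)) m := by
    apply cnt_congr
    intro i hi
    have hcomm : (1 : ℕ) + i = i + 1 := Nat.add_comm 1 i
    simp only [extW, chop1, hcomm]
    rw [dif_pos (show i < 2 * (r - 1) by omega)]
  omega

lemma cnt_chop2 (m : ℕ) (hm : m ≤ 2 * (n - r)) :
    cnt (extW (n - r) (chop2 n r w)) m + r = cnt (extW n w) (2 * r + m) := by
  have h1 : cnt (extW n w) (2 * r + m)
      = cnt (extW n w) (2 * r) + cnt (fun i => extW n w (2 * r + i)) m := cnt_add _ _ m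
  have h2 : cnt (extW (n - r) (chop2 n r w)) m = cnt (fun i => extW n w (2 * r + i)) m := by
    apply cnt_congr
    intro i hi
    have hcomm : 2 * r + i = i + 2 * r := Nat.add_comm _ _
    simp only [extW, chop2, hcomm]
    rw [dif_pos (show i < 2 * (n - r) by omega)]
  omega

lemma chop1_isDyck : IsDyckPath (r - 1) (chop1 n r w) := by
  rw [isDyck_iff]
  constructor
  · intro m hm
    have h1 := cnt_chop1 hw hr hrn hret hmin m hm
    have h2 := decomp_strict hw hr hrn hret hmin (m + 1) (by omega) (by omega)
    omega
  · have h1 := cnt_chop1 hw hr hrn hret hmin (2 * (r - 1)) (le_refl _)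
    have h2 := decomp_cnt_pre hw hr hrn hret hmin
    rw [show 2 * (r - 1) + 1 = 2 * r - 1 by omega] at h1
    omega

lemma chop2_isDyck : IsDyckPath (n - r) (chop2 n r w) := by
  rw [isDyck_iff] at hw ⊢
  constructor
  · intro m hm
    have h1 := cnt_chop2 (isDyck_iff n w |>.mpr hw) hr hrn hret hmin m hm
    have h2 := hw.1 (2 * r + m) (by omega)
    omega
  · have h1 := cnt_chop2 (isDyck_iff n w |>.mpr hw) hr hrn hret hmin (2 * (n - r)) (le_refl _)
    rw [show 2 * r + 2 * (n - r) = 2 * n by omega] at h1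
    omega

lemma glue_chop : glue n r (chop1 n r w) (chop2 n r w) = w := by
  funext p
  have hp := p.isLt
  have hwp : extW n w p.val = w p := by simp [extW, hp]
  simp only [glue]
  rcases Nat.eq_zero_or_pos p.val with h0 | h0
  · rw [h0]
    have h1 := decomp_zero hw hr hrn hret hmin
    rw [h0] at hwp
    show true = w p
    exact h1.symm.trans hwp
  · obtain ⟨m, hm⟩ : ∃ m, p.val = m + 1 := ⟨p.val - 1, by omega⟩
    rw [hm] at hwp ⊢
    rcases lt_trichotomy m (2 * (r - 1)) with h | h | h
    · show glueW _ _ _ (m + 1) = w p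
      simp only [glueW]
      rw [if_pos h]
      rw [← hwp]
      simp only [extW, chop1, dif_pos h]
    · show glueW _ _ _ (m + 1) = w p
      simp only [glueW]
      rw [if_neg (by omega), if_pos h]
      have h1 := decomp_mid hw hr hrn hret hmin
      rw [show 2 * r - 1 = m + 1 by omega] at h1
      exact (h1.symm.trans hwp)
    · show glueW _ _ _ (m + 1) = w p
      simp only [glueW]
      rw [if_neg (by omega), if_neg (by omega)]
      have hj : m + 1 - 2 * r < 2 * (n - r) := by omega
      rw [← hwp]
      have hidx : m + 1 - 2 * r + 2 * r = m + 1 := by omega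
      simp only [extW, chop2, dif_pos hj, hidx]

end Decomp

/- ### chop of glue -/

lemma chop1_glue {n r : ℕ} (hr : 1 ≤ r) (hrn : r ≤ n)
    (w₁ : Fin (2 * (r - 1)) → Bool) (w₂ : Fin (2 * (n - r)) → Bool) :
    chop1 n r (glue n r w₁ w₂) = w₁ := by
  funext p
  have hp := p.isLt
  have h1 : p.val + 1 < 2 * n := by omega
  simp only [chop1, extW, dif_pos h1, glue]
  show glueW _ _ _ (p.val + 1) = w₁ p
  simp only [glueW]
  rw [if_pos hp]
  simp [extW, hp]

lemma chop2_glue {n r : ℕ} (hr : 1 ≤ r) (hrn : r ≤ n)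
    (w₁ : Fin (2 * (r - 1)) → Bool) (w₂ : Fin (2 * (n - r)) → Bool) :
    chop2 n r (glue n r w₁ w₂) = w₂ := by
  funext p
  have hp := p.isLt
  have h1 : p.val + 2 * r < 2 * n := by omega
  simp only [chop2, extW, dif_pos h1, glue]
  show glueW _ _ _ (p.val + 2 * r) = w₂ p
  rw [Nat.add_comm, glueW_high hr]
  simp [extW, hp]

/- ### the first-return facts for a Dyck path -/

lemma firstRet_facts {n : ℕ} (hn : 1 ≤ n) {w : Fin (2 * n) → Bool} (hw : IsDyckPath n w) :
    1 ≤ firstRet n w ∧ firstRet n w ≤ n ∧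
      cnt (extW n w) (2 * firstRet n w) = firstRet n w ∧
      ∀ s, 1 ≤ s → s < firstRet n w → cnt (extW n w) (2 * s) ≠ s := by
  obtain ⟨⟨h1, h2⟩, h3⟩ := firstRet_spec hn hw
  rw [upCount_eq] at h2
  refine ⟨h1, h3, h2, fun s hs1 hs2 h => ?_⟩
  exact firstRet_min hs1 hs2 (by rw [upCount_eq]; exact h)

/- ### the fundamental bijection -/

lemma sum_glue_eq {M : Type*} [AddCommMonoid M] {n r : ℕ} (hn : 1 ≤ n) (hr : 1 ≤ r)
    (hrn : r ≤ n) (φ : (Fin (2 * n) → Bool) → M) :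
    ∑ w ∈ (dyckPaths n).filter (fun w => firstRet n w = r), φ w
      = ∑ p ∈ (dyckPaths (r - 1)) ×ˢ (dyckPaths (n - r)), φ (glue n r p.1 p.2) := by
  apply Finset.sum_bij' (fun w _ => (chop1 n r w, chop2 n r w))
    (fun p _ => glue n r p.1 p.2)
  · -- hi : image in product
    intro w hw
    rw [Finset.mem_filter] at hw
    obtain ⟨hw1, hw2⟩ := hw
    rw [mem_dyckPaths] at hw1
    obtain ⟨_, _, hret, hmin⟩ := firstRet_facts hn hw1
    rw [hw2] at hret hmin
    rw [Finset.mem_product, mem_dyckPaths, mem_dyckPaths]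
    exact ⟨chop1_isDyck hw1 hr hrn hret hmin, chop2_isDyck hw1 hr hrn hret hmin⟩
  · -- hj : glue lands in filter
    intro p hp
    rw [Finset.mem_product, mem_dyckPaths, mem_dyckPaths] at hp
    rw [Finset.mem_filter, mem_dyckPaths]
    exact ⟨glue_isDyck hr hrn hp.1 hp.2, glue_firstRet hr hrn hp.1 hp.2⟩
  · -- left inverse
    intro w hw
    rw [Finset.mem_filter] at hw
    obtain ⟨hw1, hw2⟩ := hw
    rw [mem_dyckPaths] at hw1
    obtain ⟨_, _, hret, hmin⟩ := firstRet_facts hn hw1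
    rw [hw2] at hret hmin
    exact glue_chop hw1 hr hrn hret hmin
  · -- right inverse
    intro p hp
    ext : 1
    · exact chop1_glue hr hrn p.1 p.2
    · exact chop2_glue hr hrn p.1 p.2
  · intro w hw
    rw [Finset.mem_filter] at hw
    obtain ⟨hw1, hw2⟩ := hw
    rw [mem_dyckPaths] at hw1
    obtain ⟨_, _, hret, hmin⟩ := firstRet_facts hn hw1
    rw [hw2] at hret hmin
    rw [glue_chop hw1 hr hrn hret hmin]

lemma sum_decomp {M : Type*} [AddCommMonoid M] {n : ℕ} (hn : 1 ≤ n)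
    (φ : (Fin (2 * n) → Bool) → M) :
    ∑ w ∈ dyckPaths n, φ w
      = ∑ r ∈ Finset.Icc 1 n,
          ∑ p ∈ (dyckPaths (r - 1)) ×ˢ (dyckPaths (n - r)), φ (glue n r p.1 p.2) := by
  rw [← Finset.sum_fiberwise_of_maps_to (g := fun w => firstRet n w) (t := Finset.Icc 1 n)]
  · apply Finset.sum_congr rfl
    intro r hr
    rw [Finset.mem_Icc] at hr
    exact sum_glue_eq hn hr.1 hr.2 φ
  · intro w hw
    rw [mem_dyckPaths] at hw
    obtain ⟨h1, h2, _, _⟩ := firstRet_facts hn hw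
    rw [Finset.mem_Icc]
    exact ⟨h1, h2⟩

/- ### cardinality -/

lemma dyckPaths_zero_card : (dyckPaths 0).card = 1 := by
  have h : dyckPaths 0 = Finset.univ := by
    apply Finset.eq_univ_iff_forall.mpr
    intro w
    rw [mem_dyckPaths]
    constructor
    · intro m hm
      interval_cases m
      omega
    · simp only [upCount]
      apply Finset.card_eq_zero.mpr
      apply Finset.eq_empty_of_forall_notMem
      intro p _
      exact absurd p.isLt (by omega)
  rw [h]
  simp [Finset.card_univ]

lemma card_dyckPaths : ∀ n, (dyckPaths n).card = catalan n := by
  intro n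
  induction n using Nat.strong_induction_on with
  | _ n ih =>
    rcases Nat.eq_zero_or_pos n with rfl | hn
    · rw [dyckPaths_zero_card, catalan_zero]
    obtain ⟨m, rfl⟩ : ∃ m, n = m + 1 := ⟨n - 1, by omega⟩
    have h1 : (dyckPaths (m + 1)).card = ∑ w ∈ dyckPaths (m + 1), 1 := by
      rw [Finset.card_eq_sum_ones]
    rw [h1, sum_decomp hn (fun _ => 1)]
    rw [catalan_succ, Fin.sum_univ_eq_sum_range (fun i => catalan i * catalan (m - i))]
    apply Finset.sum_bij' (fun (r : ℕ) (_ : r ∈ Finset.Icc 1 (m+1)) => r - 1)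
      (fun (i : ℕ) (_ : i ∈ Finset.range (m+1)) => i + 1)
    · intro r hr
      rw [Finset.mem_Icc] at hr
      rw [Finset.mem_range]
      omega
    · intro i hi
      rw [Finset.mem_range] at hi
      rw [Finset.mem_Icc]
      omega
    · intro r hr
      rw [Finset.mem_Icc] at hr
      omega
    · intro i hi
      omega
    · intro r hr
      rw [Finset.mem_Icc] at hr
      rw [Finset.sum_const, Finset.card_product, smul_eq_mul, mul_one]
      rw [ih (r - 1) (by omega), ih (m + 1 - r) (by omega)]
      congr 2
      omega

/- ### alpha lemmas -/

lemma alpha_eq (n : ℕ) (w : Fin (2 * n) → Bool) (k : ℕ) :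
    alpha n w k
      = ((Finset.range (2 * n + 1)).filter (fun m => cnt (extW n w) m + k = m)).card - 1 := by
  unfold alpha
  simp_rw [upCount_eq]

lemma alpha_self {k : ℕ} {w : Fin (2 * k) → Bool} (hw : IsDyckPath k w) :
    alpha k w k = 0 := by
  rw [alpha_eq]
  rw [isDyck_iff] at hw
  have h : (Finset.range (2 * k + 1)).filter (fun m => cnt (extW k w) m + k = m)
      = {2 * k} := by
    ext m
    simp only [Finset.mem_filter, Finset.mem_range, Finset.mem_singleton]
    constructor
    · rintro ⟨h1, h2⟩
      have h3 := hw.1 m (by omega)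
      omega
    · rintro rfl
      have h4 := hw.2
      refine ⟨by omega, by omega⟩
  rw [h]
  simp

section AlphaGlue

variable {n r : ℕ} (hr : 1 ≤ r) (hrn : r ≤ n)
  {w₁ : Fin (2 * (r - 1)) → Bool} {w₂ : Fin (2 * (n - r)) → Bool}
  (h₁ : IsDyckPath (r - 1) w₁) (h₂ : IsDyckPath (n - r) w₂)

include hr hrn h₁ h₂

lemma alpha_glue_low {k : ℕ} (hk1 : 1 ≤ k) (hk2 : k ≤ r - 1) :
    alpha n (glue n r w₁ w₂) k = alpha (r - 1) w₁ k := by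
  rw [alpha_eq, alpha_eq]
  congr 1
  set W₁ := extW (r - 1) w₁
  set W₂ := extW (n - r) w₂
  set G := glueW r W₁ W₂ with hG
  have hfil : (Finset.range (2 * n + 1)).filter
        (fun m => cnt (extW n (glue n r w₁ w₂)) m + k = m)
      = (Finset.range (2 * n + 1)).filter (fun m => cnt G m + k = m) := by
    apply Finset.filter_congr
    intro m hm
    rw [Finset.mem_range] at hm
    rw [← upCount_eq, upCount_glue_eq m (by omega)]
  rw [hfil]
  have himg : (Finset.range (2 * n + 1)).filter (fun m => cnt G m + k = m)
      = ((Finset.range (2 * (r - 1) + 1)).filter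
          (fun m => cnt W₁ m + k = m)).image (· + 1) := by
    ext m
    simp only [Finset.mem_filter, Finset.mem_range, Finset.mem_image]
    constructor
    · rintro ⟨h1, h2⟩
      -- m ≠ 0
      have hm0 : m ≠ 0 := by
        intro h
        rw [h, cnt_zero] at h2
        omega
      -- m < 2 * r
      have hmr : m < 2 * r := by
        by_contra hge
        push_neg at hge
        obtain ⟨j, rfl⟩ : ∃ j, m = 2 * r + j := ⟨m - 2 * r, by omega⟩
        rw [cnt_glueW_high hr, cnt_glueW_ret hr hrn h₁] at h2
        have := cnt_le W₂ j
        omega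
      obtain ⟨m', rfl⟩ : ∃ m', m = m' + 1 := ⟨m - 1, by omega⟩
      rw [cnt_glueW_low hr _ _ (by omega)] at h2
      exact ⟨m', ⟨by omega, by omega⟩, rfl⟩
    · rintro ⟨m', ⟨hm'1, hm'2⟩, rfl⟩
      rw [cnt_glueW_low hr _ _ (by omega)]
      refine ⟨by omega, by omega⟩
  rw [himg, Finset.card_image_of_injective _ (add_left_injective 1)]

lemma alpha_glue_high {k : ℕ} (hk1 : r ≤ k) (hk2 : k ≤ n) :
    alpha n (glue n r w₁ w₂) k = alpha (n - r) w₂ (k - r) := by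
  rw [alpha_eq, alpha_eq]
  congr 1
  set W₁ := extW (r - 1) w₁
  set W₂ := extW (n - r) w₂
  set G := glueW r W₁ W₂ with hG
  have hd1 : cnt W₁ (2 * (r - 1)) = r - 1 := (isDyck_iff _ _ |>.mp h₁).2
  have hfil : (Finset.range (2 * n + 1)).filter
        (fun m => cnt (extW n (glue n r w₁ w₂)) m + k = m)
      = (Finset.range (2 * n + 1)).filter (fun m => cnt G m + k = m) := by
    apply Finset.filter_congr
    intro m hm
    rw [Finset.mem_range] at hm
    rw [← upCount_eq, upCount_glue_eq m (by omega)]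
  rw [hfil]
  have himg : (Finset.range (2 * n + 1)).filter (fun m => cnt G m + k = m)
      = ((Finset.range (2 * (n - r) + 1)).filter
          (fun m => cnt W₂ m + (k - r) = m)).image (· + 2 * r) := by
    ext m
    simp only [Finset.mem_filter, Finset.mem_range, Finset.mem_image]
    constructor
    · rintro ⟨h1, h2⟩
      have hm0 : m ≠ 0 := by
        intro h
        rw [h, cnt_zero] at h2
        omega
      have hmr : 2 * r ≤ m := by
        by_contra hge
        push_neg at hge
        obtain ⟨m', rfl⟩ : ∃ m', m = m' + 1 := ⟨m - 1, by omega⟩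
        rw [cnt_glueW_low hr _ _ (by omega)] at h2
        -- k = m' - cnt W₁ m' ≤ r - 1 < k
        have hb : cnt W₁ (2 * (r - 1)) ≤ cnt W₁ m' + (2 * (r - 1) - m') := by
          have h0 := cnt_add W₁ m' (2 * (r - 1) - m')
          rw [Nat.add_sub_cancel' (show m' ≤ 2 * (r - 1) by omega)] at h0
          have := cnt_le (fun i => W₁ (m' + i)) (2 * (r - 1) - m')
          omega
        omega
      obtain ⟨j, rfl⟩ : ∃ j, m = 2 * r + j := ⟨m - 2 * r, by omega⟩
      rw [cnt_glueW_high hr, cnt_glueW_ret hr hrn h₁] at h2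
      exact ⟨j, ⟨by omega, by omega⟩, by omega⟩
    · rintro ⟨j, ⟨hj1, hj2⟩, rfl⟩
      rw [Nat.add_comm j (2 * r), cnt_glueW_high hr, cnt_glueW_ret hr hrn h₁]
      refine ⟨by omega, by omega⟩
  rw [himg, Finset.card_image_of_injective _ (add_left_injective (2 * r))]

end AlphaGlue

/-- The Dyck polynomial `P_n(y_0, …, y_{n-1}) = Σ_{π ∈ 𝒟_n} Π_{i=0}^{n-1} y_i^{α_i(π)}/α_i(π)!`
(the argument `y : ℕ → ℝ` is only used through its first `n` values; `P_0 = 1`). -/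
noncomputable def Ppoly (n : ℕ) (y : ℕ → ℝ) : ℝ :=
  ∑ w ∈ dyckPaths n, ∏ i ∈ Finset.range n, y i ^ alpha n w i / (alpha n w i).factorial

/-- The Dyck polynomial `R_n(y_0, …, y_{n-1}) = Σ_{π ∈ 𝒟_n} Π_{i=0}^{n-1} y_i^{α_i(π)}`. -/
noncomputable def Rpoly (n : ℕ) (y : ℕ → ℝ) : ℝ :=
  ∑ w ∈ dyckPaths n, ∏ i ∈ Finset.range n, y i ^ alpha n w i

/-- The one-variable Dyck polynomial `𝓡_n^{(i)}(z) = Σ_{π ∈ 𝒟_n} z^{α_i(π)+1}`. -/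
noncomputable def calR (n i : ℕ) (z : ℝ) : ℝ :=
  ∑ w ∈ dyckPaths n, z ^ (alpha n w i + 1)

/-- `𝓡_k^{(k)}(z) = C_k · z`, and for `n > k ≥ 1`,
`𝓡_n^{(k)}(z) = Σ_{i=k}^{n-1} 𝓡_i^{(k)}(z) · C_{n-1-i} + Σ_{l=0}^{k-1} C_{k-1-l} · 𝓡_{n-k+l}^{(l)}(z)`. -/
theorem calR_recursion :
    (∀ k : ℕ, ∀ z : ℝ, calR k k z = (catalan k : ℝ) * z) ∧
    ∀ n k : ℕ, 1 ≤ k → k < n → ∀ z : ℝ,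
      calR n k z =
        (∑ i ∈ Finset.Ico k n, calR i k z * (catalan (n - 1 - i) : ℝ)) +
        ∑ l ∈ Finset.range k, (catalan (k - 1 - l) : ℝ) * calR (n - k + l) l z := by
  constructor
  · intro k z
    unfold calR
    calc ∑ w ∈ dyckPaths k, z ^ (alpha k w k + 1) = ∑ w ∈ dyckPaths k, z := by
          apply Finset.sum_congr rfl
          intro w hw
          rw [mem_dyckPaths] at hw
          rw [alpha_self hw, pow_one]
      _ = (catalan k : ℝ) * z := by
          rw [Finset.sum_const, card_dyckPaths, nsmul_eq_mul]
  · intro n k hk1 hkn z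
    have hn : 1 ≤ n := by omega
    unfold calR
    rw [sum_decomp hn (fun w => z ^ (alpha n w k + 1))]
    rw [show Finset.Icc 1 n = Finset.Ioc 0 n by rw [← Finset.Icc_add_one_left_eq_Ioc]; rfl]
    rw [← Finset.sum_Ioc_consecutive _ (Nat.zero_le k) (le_of_lt hkn)]
    have hlow : ∑ r ∈ Finset.Ioc 0 k,
          (∑ p ∈ (dyckPaths (r - 1)) ×ˢ (dyckPaths (n - r)),
            z ^ (alpha n (glue n r p.1 p.2) k + 1))
        = ∑ l ∈ Finset.range k, (catalan (k - 1 - l) : ℝ) * calR (n - k + l) l z := by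
      have key : ∀ r, 1 ≤ r → r ≤ k →
          (∑ p ∈ (dyckPaths (r - 1)) ×ˢ (dyckPaths (n - r)),
              z ^ (alpha n (glue n r p.1 p.2) k + 1))
            = (catalan (r - 1) : ℝ) * calR (n - r) (k - r) z := by
        intro r h1 h2
        rw [Finset.sum_product]
        calc (∑ w₁ ∈ dyckPaths (r - 1), ∑ w₂ ∈ dyckPaths (n - r),
                z ^ (alpha n (glue n r w₁ w₂) k + 1))
            = ∑ w₁ ∈ dyckPaths (r - 1), ∑ w₂ ∈ dyckPaths (n - r),
                z ^ (alpha (n - r) w₂ (k - r) + 1) := by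
              apply Finset.sum_congr rfl; intro w₁ hw₁
              apply Finset.sum_congr rfl; intro w₂ hw₂
              rw [mem_dyckPaths] at hw₁ hw₂
              rw [alpha_glue_high h1 (by omega) hw₁ hw₂ h2 (by omega)]
          _ = ∑ _w₁ ∈ dyckPaths (r - 1), calR (n - r) (k - r) z := by
              apply Finset.sum_congr rfl; intro w₁ _
              rw [calR]
          _ = (catalan (r - 1) : ℝ) * calR (n - r) (k - r) z := by
              rw [Finset.sum_const, card_dyckPaths, nsmul_eq_mul]
      apply Finset.sum_bij' (fun (r : ℕ) (_ : r ∈ Finset.Ioc 0 k) => k - r)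
        (fun (l : ℕ) (_ : l ∈ Finset.range k) => k - l)
      · intro r hr
        rw [Finset.mem_Ioc] at hr
        rw [Finset.mem_range]
        omega
      · intro l hl
        rw [Finset.mem_range] at hl
        rw [Finset.mem_Ioc]
        omega
      · intro r hr
        rw [Finset.mem_Ioc] at hr
        omega
      · intro l hl
        rw [Finset.mem_range] at hl
        omega
      · intro r hr
        rw [Finset.mem_Ioc] at hr
        rw [key r hr.1 hr.2]
        have e1 : k - 1 - (k - r) = r - 1 := by omega
        have e2 : n - k + (k - r) = n - r := by omega
        have e3 : k - r = k - r := rfl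
        rw [e1, e2]
    have hhigh : ∑ r ∈ Finset.Ioc k n,
          (∑ p ∈ (dyckPaths (r - 1)) ×ˢ (dyckPaths (n - r)),
            z ^ (alpha n (glue n r p.1 p.2) k + 1))
        = ∑ i ∈ Finset.Ico k n, calR i k z * (catalan (n - 1 - i) : ℝ) := by
      have key : ∀ r, k < r → r ≤ n →
          (∑ p ∈ (dyckPaths (r - 1)) ×ˢ (dyckPaths (n - r)),
              z ^ (alpha n (glue n r p.1 p.2) k + 1))
            = calR (r - 1) k z * (catalan (n - r) : ℝ) := by
        intro r h1 h2
        rw [Finset.sum_product]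
        calc (∑ w₁ ∈ dyckPaths (r - 1), ∑ w₂ ∈ dyckPaths (n - r),
                z ^ (alpha n (glue n r w₁ w₂) k + 1))
            = ∑ w₁ ∈ dyckPaths (r - 1), ∑ _w₂ ∈ dyckPaths (n - r),
                z ^ (alpha (r - 1) w₁ k + 1) := by
              apply Finset.sum_congr rfl; intro w₁ hw₁
              apply Finset.sum_congr rfl; intro w₂ hw₂
              rw [mem_dyckPaths] at hw₁ hw₂
              rw [alpha_glue_low (by omega) h2 hw₁ hw₂ hk1 (by omega)]
          _ = ∑ w₁ ∈ dyckPaths (r - 1), (catalan (n - r) : ℝ) * z ^ (alpha (r - 1) w₁ k + 1) := by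
              apply Finset.sum_congr rfl; intro w₁ _
              rw [Finset.sum_const, card_dyckPaths, nsmul_eq_mul]
          _ = calR (r - 1) k z * (catalan (n - r) : ℝ) := by
              rw [← Finset.mul_sum, mul_comm, calR]
      apply Finset.sum_bij' (fun (r : ℕ) (_ : r ∈ Finset.Ioc k n) => r - 1)
        (fun (i : ℕ) (_ : i ∈ Finset.Ico k n) => i + 1)
      · intro r hr
        rw [Finset.mem_Ioc] at hr
        rw [Finset.mem_Ico]
        omega
      · intro i hi
        rw [Finset.mem_Ico] at hi
        rw [Finset.mem_Ioc]
        omega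
      · intro r hr
        rw [Finset.mem_Ioc] at hr
        omega
      · intro i hi
        omega
      · intro r hr
        rw [Finset.mem_Ioc] at hr
        rw [key r hr.1 hr.2]
        have e1 : n - 1 - (r - 1) = n - r := by omega
        rw [e1]
    rw [hlow, hhigh, add_comm]
    rfl
end
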